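/- arXiv:1211.6780 — 5 statements merged into one kernel-verified Lean document; each statement's English description precedes it below -/
import Mathlib

section
/- Let p_1,…,p_{2n} : [0,T) → ℝ² be a solution of the planar point-vortex gradient flow. Then the sum V₀(t) = Σ_{i=1}^{2n} P_i(t) of the corresponding sphere points is differentiable on (0,T) and satisfies V₀'(t) = V₀(t) for every t ∈ (0,T). -/
open Finset

noncomputable section

abbrev E2 := EuclideanSpace ℝ (Fin 2)
abbrev E3 := EuclideanSpace ℝ (Fin 3)

/-- Velocity field of the planar point-vortex gradient flow. -/
def pvVel {N : ℕ} (d : Fin N → ℤ) (q : Fin N → E2) (i : Fin N) : E2 :=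
  ((1 + ‖q i‖ ^ 2) ^ 2 / 2) •
    ((1 + ‖q i‖ ^ 2)⁻¹ • q i +
      (d i : ℝ) • ∑ j ∈ univ.erase i, (d j : ℝ) • (‖q i - q j‖ ^ 2)⁻¹ • (q i - q j))

/-- Inverse stereographic projection: the sphere point corresponding to `p ∈ ℝ²`. -/
def sph (p : E2) : E3 :=
  (WithLp.equiv 2 (Fin 3 → ℝ)).symm
    ![2 * p 0 / (1 + ‖p‖ ^ 2), 2 * p 1 / (1 + ‖p‖ ^ 2), (‖p‖ ^ 2 - 1) / (1 + ‖p‖ ^ 2)]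

/-! ### Auxiliary lemmas -/

lemma normsq_E2 (q : E2) : ‖q‖ ^ 2 = q 0 ^ 2 + q 1 ^ 2 := by
  rw [EuclideanSpace.norm_eq, Real.sq_sqrt (by positivity)]
  simp [Fin.sum_univ_two, sq_abs]

lemma sum_apply_E2 {ι : Type*} (s : Finset ι) (f : ι → E2) (k : Fin 2) :
    (∑ j ∈ s, f j) k = ∑ j ∈ s, f j k :=
  map_sum (EuclideanSpace.proj (𝕜 := ℝ) k) f s

lemma pvVel_apply {N : ℕ} (d : Fin N → ℤ) (q : Fin N → E2) (i : Fin N) (k : Fin 2) :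
    pvVel d q i k =
      ((1 + ‖q i‖ ^ 2) ^ 2 / 2) *
        ((1 + ‖q i‖ ^ 2)⁻¹ * q i k +
          (d i : ℝ) * ∑ j ∈ univ.erase i, (d j : ℝ) * ((‖q i - q j‖ ^ 2)⁻¹ * (q i k - q j k))) := by
  simp [pvVel, sum_apply_E2, mul_assoc, mul_add]

lemma sph_eq (q : E2) : sph q = (EuclideanSpace.equiv (Fin 3) ℝ).symm
    ![2 * q 0 / (1 + ‖q‖ ^ 2), 2 * q 1 / (1 + ‖q‖ ^ 2), (‖q‖ ^ 2 - 1) / (1 + ‖q‖ ^ 2)] := rfl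

lemma double_sum_symm {N : ℕ} (F H : Fin N → Fin N → ℝ)
    (h : ∀ i j, i ≠ j → F i j + F j i = H i j) :
    2 * ∑ i, ∑ j ∈ univ.erase i, F i j = ∑ i, ∑ j ∈ univ.erase i, H i j := by
  have swap : ∑ i, ∑ j ∈ univ.erase i, F j i = ∑ i, ∑ j ∈ univ.erase i, F i j :=
    Finset.sum_comm' (fun x y => by simp [ne_comm])
  calc 2 * ∑ i, ∑ j ∈ univ.erase i, F i j
      = ∑ i, ∑ j ∈ univ.erase i, F i j + ∑ i, ∑ j ∈ univ.erase i, F j i := by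
        rw [swap]; ring
    _ = ∑ i, ∑ j ∈ univ.erase i, (F i j + F j i) := by
        rw [← Finset.sum_add_distrib]
        exact Finset.sum_congr rfl fun i _ => (Finset.sum_add_distrib).symm
    _ = _ := Finset.sum_congr rfl fun i _ => Finset.sum_congr rfl fun j hj =>
        h i j fun e => (Finset.mem_erase.1 hj).1 e.symm

lemma lemA {N : ℕ} (dr X Y : Fin N → ℝ) (U : Fin N → Fin N → ℝ)
    (hd2 : ∀ i, dr i * dr i = 1) (hsum : ∑ i, dr i = 0)
    (hUdef : ∀ i j, U i j = (X i - X j) ^ 2 + (Y i - Y j) ^ 2)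
    (hUne : ∀ i j, i ≠ j → U i j ≠ 0) :
    2 * ∑ i, ∑ j ∈ univ.erase i, dr i * dr j *
        ((X i * (X i - X j) + Y i * (Y i - Y j)) / U i j)
      = -(N : ℝ) := by
  rw [double_sum_symm _ (fun i j => dr i * dr j) ?_]
  · have h1 : ∀ i : Fin N, ∑ j ∈ univ.erase i, dr i * dr j = -1 := by
      intro i
      rw [← Finset.mul_sum, Finset.sum_erase_eq_sub (Finset.mem_univ i), hsum,
        zero_sub, mul_neg, hd2 i]
    rw [Finset.sum_congr rfl fun i _ => h1 i]
    simp [Finset.card_univ]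
  · intro i j hij
    have h1 := hUne i j hij
    rw [hUdef i j] at h1 ⊢
    rw [hUdef j i,
      show (X j - X i) ^ 2 + (Y j - Y i) ^ 2 = (X i - X j) ^ 2 + (Y i - Y j) ^ 2 from by ring]
    field_simp
    ring

lemma lemB {N : ℕ} (dr X Y : Fin N → ℝ) (U : Fin N → Fin N → ℝ)
    (hd2 : ∀ i, dr i * dr i = 1) (hsum : ∑ i, dr i = 0)
    (hUdef : ∀ i j, U i j = (X i - X j) ^ 2 + (Y i - Y j) ^ 2)
    (hUne : ∀ i j, i ≠ j → U i j ≠ 0) :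
    2 * ∑ i, ∑ j ∈ univ.erase i, dr i * dr j *
        (((1 + X i ^ 2 + Y i ^ 2) * (X i - X j)
            - 2 * X i * (X i * (X i - X j) + Y i * (Y i - Y j)))
          / U i j)
      = 2 * ∑ i, X i := by
  rw [double_sum_symm _ (fun i j => -(dr i * dr j * (X i + X j))) ?_]
  · have h1 : ∀ i : Fin N, ∑ j ∈ univ.erase i, -(dr i * dr j * (X i + X j))
        = 2 * X i - dr i * ∑ j, dr j * X j := by
      intro i
      have e1 : ∑ j ∈ univ.erase i, dr j = -dr i := by
        rw [Finset.sum_erase_eq_sub (Finset.mem_univ i), hsum]; ring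
      have e2 : ∑ j ∈ univ.erase i, dr j * X j = (∑ j, dr j * X j) - dr i * X i :=
        Finset.sum_erase_eq_sub (Finset.mem_univ i)
      calc ∑ j ∈ univ.erase i, -(dr i * dr j * (X i + X j))
          = ∑ j ∈ univ.erase i, ((-(dr i * X i)) * dr j + (-(dr i)) * (dr j * X j)) :=
            Finset.sum_congr rfl fun j _ => by ring
        _ = (-(dr i * X i)) * (∑ j ∈ univ.erase i, dr j)
              + (-(dr i)) * ∑ j ∈ univ.erase i, dr j * X j := by
            rw [Finset.sum_add_distrib, Finset.mul_sum, Finset.mul_sum]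
        _ = 2 * X i - dr i * ∑ j, dr j * X j := by
            rw [e1, e2]; linear_combination 2 * X i * hd2 i
    rw [Finset.sum_congr rfl fun i _ => h1 i, Finset.sum_sub_distrib,
      ← Finset.sum_mul, hsum, ← Finset.mul_sum]
    rw [zero_mul]
    ring
  · intro i j hij
    have h1 := hUne i j hij
    rw [hUdef i j] at h1 ⊢
    rw [hUdef j i,
      show (X j - X i) ^ 2 + (Y j - Y i) ^ 2 = (X i - X j) ^ 2 + (Y i - Y j) ^ 2 from by ring]
    field_simp
    ring

/-- Main scalar identity for the first two coordinates. -/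
lemma coordMain {N : ℕ} (dr X Y vx vy : Fin N → ℝ)
    (U : Fin N → Fin N → ℝ) (W : Fin N → ℝ)
    (hd2 : ∀ i, dr i * dr i = 1) (hsum : ∑ i, dr i = 0)
    (hUdef : ∀ i j, U i j = (X i - X j) ^ 2 + (Y i - Y j) ^ 2)
    (hUne : ∀ i j, i ≠ j → U i j ≠ 0)
    (hWdef : ∀ i, W i = 1 + X i ^ 2 + Y i ^ 2)
    (hvx : ∀ i, vx i = (W i ^ 2 / 2) *
      ((W i)⁻¹ * X i + dr i * ∑ j ∈ univ.erase i, dr j * ((U i j)⁻¹ * (X i - X j))))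
    (hvy : ∀ i, vy i = (W i ^ 2 / 2) *
      ((W i)⁻¹ * Y i + dr i * ∑ j ∈ univ.erase i, dr j * ((U i j)⁻¹ * (Y i - Y j)))) :
    ∑ i, (2 * vx i * W i
        - 2 * X i * (vx i * X i + X i * vx i + (vy i * Y i + Y i * vy i))) / W i ^ 2
      = ∑ i, 2 * X i / W i := by
  have key : ∀ i, (2 * vx i * W i
        - 2 * X i * (vx i * X i + X i * vx i + (vy i * Y i + Y i * vy i))) / W i ^ 2
      = 2 * X i / W i - X i + dr i * ∑ j ∈ univ.erase i, dr j *
          (((1 + X i ^ 2 + Y i ^ 2) * (X i - X j)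
            - 2 * X i * (X i * (X i - X j) + Y i * (Y i - Y j))) / U i j) := by
    intro i
    have hWne : W i ≠ 0 := by rw [hWdef i]; positivity
    have hT : ∑ j ∈ univ.erase i, dr j *
          (((1 + X i ^ 2 + Y i ^ 2) * (X i - X j)
            - 2 * X i * (X i * (X i - X j) + Y i * (Y i - Y j))) / U i j)
        = (1 + X i ^ 2 + Y i ^ 2 - 2 * X i * X i) *
            (∑ j ∈ univ.erase i, dr j * ((U i j)⁻¹ * (X i - X j)))
          - (2 * X i * Y i) * (∑ j ∈ univ.erase i, dr j * ((U i j)⁻¹ * (Y i - Y j))) := by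
      rw [Finset.mul_sum, Finset.mul_sum, ← Finset.sum_sub_distrib]
      exact Finset.sum_congr rfl fun j _ => by ring
    rw [hT, hvx i, hvy i, hWdef i]
    have hWne' : (1 : ℝ) + X i ^ 2 + Y i ^ 2 ≠ 0 := by positivity
    field_simp
    ring
  rw [Finset.sum_congr rfl fun i _ => key i]
  have hpush : ∑ i, (dr i * ∑ j ∈ univ.erase i, dr j *
          (((1 + X i ^ 2 + Y i ^ 2) * (X i - X j)
            - 2 * X i * (X i * (X i - X j) + Y i * (Y i - Y j))) / U i j))
      = ∑ i, ∑ j ∈ univ.erase i, dr i * dr j *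
          (((1 + X i ^ 2 + Y i ^ 2) * (X i - X j)
            - 2 * X i * (X i * (X i - X j) + Y i * (Y i - Y j))) / U i j) := by
    refine Finset.sum_congr rfl fun i _ => ?_
    rw [Finset.mul_sum]
    exact Finset.sum_congr rfl fun j _ => by ring
  have hB := lemB dr X Y U hd2 hsum hUdef hUne
  rw [Finset.sum_add_distrib, Finset.sum_sub_distrib, hpush]
  have : ∑ i, ∑ j ∈ univ.erase i, dr i * dr j *
          (((1 + X i ^ 2 + Y i ^ 2) * (X i - X j)
            - 2 * X i * (X i * (X i - X j) + Y i * (Y i - Y j))) / U i j) = ∑ i, X i := by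
    linarith
  rw [this]
  ring

/-- Main scalar identity for the third coordinate. -/
lemma coordMain2 {N : ℕ} (dr X Y vx vy : Fin N → ℝ)
    (U : Fin N → Fin N → ℝ) (W R : Fin N → ℝ)
    (hd2 : ∀ i, dr i * dr i = 1) (hsum : ∑ i, dr i = 0)
    (hUdef : ∀ i j, U i j = (X i - X j) ^ 2 + (Y i - Y j) ^ 2)
    (hUne : ∀ i j, i ≠ j → U i j ≠ 0)
    (hRdef : ∀ i, R i = X i ^ 2 + Y i ^ 2)
    (hWdef : ∀ i, W i = 1 + R i)
    (hvx : ∀ i, vx i = (W i ^ 2 / 2) *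
      ((W i)⁻¹ * X i + dr i * ∑ j ∈ univ.erase i, dr j * ((U i j)⁻¹ * (X i - X j))))
    (hvy : ∀ i, vy i = (W i ^ 2 / 2) *
      ((W i)⁻¹ * Y i + dr i * ∑ j ∈ univ.erase i, dr j * ((U i j)⁻¹ * (Y i - Y j)))) :
    ∑ i, ((vx i * X i + X i * vx i + (vy i * Y i + Y i * vy i)) * W i
        - (R i - 1) * (vx i * X i + X i * vx i + (vy i * Y i + Y i * vy i))) / W i ^ 2
      = ∑ i, (R i - 1) / W i := by
  have key : ∀ i, ((vx i * X i + X i * vx i + (vy i * Y i + Y i * vy i)) * W i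
        - (R i - 1) * (vx i * X i + X i * vx i + (vy i * Y i + Y i * vy i))) / W i ^ 2
      = (R i - 1) / W i + 1 + 2 * (dr i * ∑ j ∈ univ.erase i, dr j *
          ((X i * (X i - X j) + Y i * (Y i - Y j)) / U i j)) := by
    intro i
    have hT : ∑ j ∈ univ.erase i, dr j *
          ((X i * (X i - X j) + Y i * (Y i - Y j)) / U i j)
        = X i * (∑ j ∈ univ.erase i, dr j * ((U i j)⁻¹ * (X i - X j)))
          + Y i * (∑ j ∈ univ.erase i, dr j * ((U i j)⁻¹ * (Y i - Y j))) := by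
      rw [Finset.mul_sum, Finset.mul_sum, ← Finset.sum_add_distrib]
      exact Finset.sum_congr rfl fun j _ => by ring
    rw [hT, hvx i, hvy i, hWdef i, hRdef i]
    have hWne' : (1 : ℝ) + (X i ^ 2 + Y i ^ 2) ≠ 0 := by positivity
    field_simp
    ring
  rw [Finset.sum_congr rfl fun i _ => key i]
  have hpush : ∑ i, (dr i * ∑ j ∈ univ.erase i, dr j *
          ((X i * (X i - X j) + Y i * (Y i - Y j)) / U i j))
      = ∑ i, ∑ j ∈ univ.erase i, dr i * dr j *
          ((X i * (X i - X j) + Y i * (Y i - Y j)) / U i j) := by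
    refine Finset.sum_congr rfl fun i _ => ?_
    rw [Finset.mul_sum]
    exact Finset.sum_congr rfl fun j _ => by ring
  have hA := lemA dr X Y U hd2 hsum hUdef hUne
  rw [Finset.sum_add_distrib, Finset.sum_add_distrib, ← Finset.mul_sum, hpush]
  have hcard : ∑ _i : Fin N, (1 : ℝ) = (N : ℝ) := by
    simp [Finset.card_univ]
  rw [hcard]
  have : (2 : ℝ) * ∑ i, ∑ j ∈ univ.erase i, dr i * dr j *
          ((X i * (X i - X j) + Y i * (Y i - Y j)) / U i j) = -(N : ℝ) := hA
  linarith

/-- The sum of the sphere points of a solution of the planar point-vortex gradient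
flow is differentiable on `(0,T)` and satisfies `V₀' = V₀`. -/
theorem sum_sphere_points_hasDerivAt_self
    (n : ℕ) (hn : 1 ≤ n) (T : ℝ)
    (p : Fin (2 * n) → ℝ → E2) (d : Fin (2 * n) → ℤ)
    (hd : ∀ i, d i = 1 ∨ d i = -1) (hdsum : ∑ i, d i = 0)
    (hdist : ∀ t ∈ Set.Ico (0 : ℝ) T, ∀ i j, i ≠ j → p i t ≠ p j t)
    (hode : ∀ t ∈ Set.Ico (0 : ℝ) T, ∀ i,
      HasDerivWithinAt (p i) (pvVel d (fun j => p j t) i) (Set.Ico (0 : ℝ) T) t) :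
    ∀ t ∈ Set.Ioo (0 : ℝ) T,
      HasDerivAt (fun s => ∑ i, sph (p i s)) (∑ i, sph (p i t)) t := by
  intro t ht
  have htmem : t ∈ Set.Ico (0 : ℝ) T := ⟨le_of_lt ht.1, ht.2⟩
  have hnhds : Set.Ico (0 : ℝ) T ∈ nhds t :=
    Filter.mem_of_superset (Ioo_mem_nhds ht.1 ht.2) Set.Ioo_subset_Ico_self
  set q : Fin (2 * n) → E2 := fun j => p j t with hq
  set V : Fin (2 * n) → E2 := fun i => pvVel d q i with hV
  have hD : ∀ i, HasDerivAt (p i) (V i) t := fun i => (hode t htmem i).hasDerivAt hnhds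
  have hX : ∀ i (k : Fin 2), HasDerivAt (fun s => p i s k) (V i k) t := fun i k =>
    (EuclideanSpace.proj (𝕜 := ℝ) k).hasFDerivAt.comp_hasDerivAt t (hD i)
  have hR : ∀ i, HasDerivAt (fun s => ‖p i s‖ ^ 2)
      (V i 0 * q i 0 + q i 0 * V i 0 + (V i 1 * q i 1 + q i 1 * V i 1)) t := by
    intro i
    have e : (fun s => ‖p i s‖ ^ 2)
        = fun s => p i s 0 * p i s 0 + p i s 1 * p i s 1 :=
      funext fun s => by rw [normsq_E2]; ring
    rw [e]
    exact ((hX i 0).mul (hX i 0)).add ((hX i 1).mul (hX i 1))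
  have hWne : ∀ i, (1 + ‖q i‖ ^ 2) ≠ 0 := fun i => by positivity
  have hW : ∀ i, HasDerivAt (fun s => 1 + ‖p i s‖ ^ 2)
      (V i 0 * q i 0 + q i 0 * V i 0 + (V i 1 * q i 1 + q i 1 * V i 1)) t := fun i =>
    (hR i).const_add 1
  have hc0 : ∀ i, HasDerivAt (fun s => 2 * p i s 0 / (1 + ‖p i s‖ ^ 2))
      ((2 * V i 0 * (1 + ‖q i‖ ^ 2)
        - 2 * q i 0 * (V i 0 * q i 0 + q i 0 * V i 0 + (V i 1 * q i 1 + q i 1 * V i 1)))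
        / (1 + ‖q i‖ ^ 2) ^ 2) t :=
    fun i => ((hX i 0).const_mul 2).div (hW i) (hWne i)
  have hc1 : ∀ i, HasDerivAt (fun s => 2 * p i s 1 / (1 + ‖p i s‖ ^ 2))
      ((2 * V i 1 * (1 + ‖q i‖ ^ 2)
        - 2 * q i 1 * (V i 0 * q i 0 + q i 0 * V i 0 + (V i 1 * q i 1 + q i 1 * V i 1)))
        / (1 + ‖q i‖ ^ 2) ^ 2) t :=
    fun i => ((hX i 1).const_mul 2).div (hW i) (hWne i)
  have hc2 : ∀ i, HasDerivAt (fun s => (‖p i s‖ ^ 2 - 1) / (1 + ‖p i s‖ ^ 2))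
      (((V i 0 * q i 0 + q i 0 * V i 0 + (V i 1 * q i 1 + q i 1 * V i 1)) * (1 + ‖q i‖ ^ 2)
        - (‖q i‖ ^ 2 - 1) * (V i 0 * q i 0 + q i 0 * V i 0 + (V i 1 * q i 1 + q i 1 * V i 1)))
        / (1 + ‖q i‖ ^ 2) ^ 2) t :=
    fun i => ((hR i).sub_const 1).div (hW i) (hWne i)
  set L := (EuclideanSpace.equiv (Fin 3) ℝ).symm with hL
  have hsph : ∀ i, HasDerivAt (fun s => sph (p i s))
      (L ![(2 * V i 0 * (1 + ‖q i‖ ^ 2)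
        - 2 * q i 0 * (V i 0 * q i 0 + q i 0 * V i 0 + (V i 1 * q i 1 + q i 1 * V i 1)))
        / (1 + ‖q i‖ ^ 2) ^ 2,
        (2 * V i 1 * (1 + ‖q i‖ ^ 2)
        - 2 * q i 1 * (V i 0 * q i 0 + q i 0 * V i 0 + (V i 1 * q i 1 + q i 1 * V i 1)))
        / (1 + ‖q i‖ ^ 2) ^ 2,
        ((V i 0 * q i 0 + q i 0 * V i 0 + (V i 1 * q i 1 + q i 1 * V i 1)) * (1 + ‖q i‖ ^ 2)
        - (‖q i‖ ^ 2 - 1) * (V i 0 * q i 0 + q i 0 * V i 0 + (V i 1 * q i 1 + q i 1 * V i 1)))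
        / (1 + ‖q i‖ ^ 2) ^ 2]) t := by
    intro i
    have hpi : HasDerivAt (fun s => (![2 * p i s 0 / (1 + ‖p i s‖ ^ 2),
        2 * p i s 1 / (1 + ‖p i s‖ ^ 2),
        (‖p i s‖ ^ 2 - 1) / (1 + ‖p i s‖ ^ 2)] : Fin 3 → ℝ))
        ![(2 * V i 0 * (1 + ‖q i‖ ^ 2)
        - 2 * q i 0 * (V i 0 * q i 0 + q i 0 * V i 0 + (V i 1 * q i 1 + q i 1 * V i 1)))
        / (1 + ‖q i‖ ^ 2) ^ 2,
        (2 * V i 1 * (1 + ‖q i‖ ^ 2)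
        - 2 * q i 1 * (V i 0 * q i 0 + q i 0 * V i 0 + (V i 1 * q i 1 + q i 1 * V i 1)))
        / (1 + ‖q i‖ ^ 2) ^ 2,
        ((V i 0 * q i 0 + q i 0 * V i 0 + (V i 1 * q i 1 + q i 1 * V i 1)) * (1 + ‖q i‖ ^ 2)
        - (‖q i‖ ^ 2 - 1) * (V i 0 * q i 0 + q i 0 * V i 0 + (V i 1 * q i 1 + q i 1 * V i 1)))
        / (1 + ‖q i‖ ^ 2) ^ 2] t := by
      rw [hasDerivAt_pi]
      intro k
      fin_cases k
      · exact hc0 i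
      · exact hc1 i
      · exact hc2 i
    exact (L.toContinuousLinearMap.hasFDerivAt.comp_hasDerivAt t hpi : _)
  have hsum := HasDerivAt.fun_sum (fun i (_ : i ∈ univ) => hsph i)
  convert hsum using 1
  case e'_4 => rfl
  case e'_5 => rfl
  case e'_6 => rfl
  rw [← map_sum]
  have hsphL : ∀ i, sph (q i) = L ![2 * q i 0 / (1 + ‖q i‖ ^ 2),
      2 * q i 1 / (1 + ‖q i‖ ^ 2), (‖q i‖ ^ 2 - 1) / (1 + ‖q i‖ ^ 2)] := fun i => sph_eq (q i)
  rw [Finset.sum_congr rfl fun i _ => hsphL i, ← map_sum]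
  refine congrArg L ?_
  have hUdef : ∀ i j : Fin (2 * n), ‖q i - q j‖ ^ 2
      = (q i 0 - q j 0) ^ 2 + (q i 1 - q j 1) ^ 2 := by
    intro i j
    rw [normsq_E2]
    simp
  have hUne : ∀ i j : Fin (2 * n), i ≠ j → ‖q i - q j‖ ^ 2 ≠ 0 := fun i j hij =>
    pow_ne_zero 2 (norm_ne_zero_iff.mpr (sub_ne_zero.mpr (hdist t htmem i j hij)))
  have hd2 : ∀ i, (d i : ℝ) * (d i : ℝ) = 1 := by
    intro i
    rcases hd i with h | h <;> rw [h] <;> norm_num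
  have hsumr : ∑ i, (d i : ℝ) = 0 := by
    have : ((∑ i, d i : ℤ) : ℝ) = 0 := by rw [hdsum]; norm_num
    rwa [Int.cast_sum] at this
  have hvx : ∀ i, V i 0 = ((1 + ‖q i‖ ^ 2) ^ 2 / 2) *
      ((1 + ‖q i‖ ^ 2)⁻¹ * q i 0 +
        (d i : ℝ) * ∑ j ∈ univ.erase i, (d j : ℝ) * ((‖q i - q j‖ ^ 2)⁻¹ * (q i 0 - q j 0))) := by
    intro i
    simp only [hV]
    exact pvVel_apply d q i 0
  have hvy : ∀ i, V i 1 = ((1 + ‖q i‖ ^ 2) ^ 2 / 2) *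
      ((1 + ‖q i‖ ^ 2)⁻¹ * q i 1 +
        (d i : ℝ) * ∑ j ∈ univ.erase i, (d j : ℝ) * ((‖q i - q j‖ ^ 2)⁻¹ * (q i 1 - q j 1))) := by
    intro i
    simp only [hV]
    exact pvVel_apply d q i 1
  have hW2 : ∀ i, 1 + ‖q i‖ ^ 2 = 1 + q i 0 ^ 2 + q i 1 ^ 2 := by
    intro i; rw [normsq_E2]; ring
  funext k
  rw [Finset.sum_apply, Finset.sum_apply]
  fin_cases k
  · exact (coordMain (fun i => (d i : ℝ)) (fun i => q i 0) (fun i => q i 1)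
      (fun i => V i 0) (fun i => V i 1) (fun i j => ‖q i - q j‖ ^ 2)
      (fun i => 1 + ‖q i‖ ^ 2) hd2 hsumr hUdef hUne hW2 hvx hvy).symm
  · have hmain := (coordMain (fun i => (d i : ℝ)) (fun i => q i 1) (fun i => q i 0)
      (fun i => V i 1) (fun i => V i 0) (fun i j => ‖q i - q j‖ ^ 2)
      (fun i => 1 + ‖q i‖ ^ 2) hd2 hsumr
      (fun i j => by
        show ‖q i - q j‖ ^ 2 = (q i 1 - q j 1) ^ 2 + (q i 0 - q j 0) ^ 2
        rw [hUdef i j]; ring) hUne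
      (fun i => by
        show 1 + ‖q i‖ ^ 2 = 1 + q i 1 ^ 2 + q i 0 ^ 2
        rw [hW2 i]; ring) hvy hvx).symm
    have hreorder : ∑ i, (2 * V i 1 * (1 + ‖q i‖ ^ 2)
          - 2 * q i 1 * (V i 1 * q i 1 + q i 1 * V i 1 + (V i 0 * q i 0 + q i 0 * V i 0)))
          / (1 + ‖q i‖ ^ 2) ^ 2
        = ∑ i, (2 * V i 1 * (1 + ‖q i‖ ^ 2)
          - 2 * q i 1 * (V i 0 * q i 0 + q i 0 * V i 0 + (V i 1 * q i 1 + q i 1 * V i 1)))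
          / (1 + ‖q i‖ ^ 2) ^ 2 :=
      Finset.sum_congr rfl fun i _ => by ring
    exact hmain.trans hreorder
  · exact (coordMain2 (fun i => (d i : ℝ)) (fun i => q i 0) (fun i => q i 1)
      (fun i => V i 0) (fun i => V i 1) (fun i j => ‖q i - q j‖ ^ 2)
      (fun i => 1 + ‖q i‖ ^ 2) (fun i => ‖q i‖ ^ 2) hd2 hsumr hUdef hUne
      (fun i => normsq_E2 (q i)) (fun i => rfl) hvx hvy).symm
end
end

section
/- Let p_1,…,p_{2n} : [0,T) → ℝ² be a solution of the planar point-vortex gradient flow. Then V₀(t) = e^t · V₀(0) for all t ∈ [0,T). Consequently, if V₀(0) ≠ 0 then the unit vector V₀(t)/|V₀(t)| is constant in t, equal to V₀(0)/|V₀(0)| (conservation of the center of mass direction). -/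
open Finset

noncomputable section

section Auxiliary

lemma swapSum {N : ℕ} (F : Fin N → Fin N → ℝ) :
    ∑ i, ∑ j ∈ univ.erase i, F j i = ∑ i, ∑ j ∈ univ.erase i, F i j :=
  Finset.sum_comm' (by intro x y; simp [mem_erase]; tauto)
lemma pair_sum {N : ℕ} (d : Fin N → ℤ) (hd : ∀ i, d i = 1 ∨ d i = -1)
    (hdsum : ∑ i, d i = 0) (F : Fin N → Fin N → ℝ) (g : Fin N → ℝ)
    (hF : ∀ i j, i ≠ j → F i j + F j i = -((d i : ℝ) * (d j : ℝ)) * (g i + g j)) :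
    ∑ i, ∑ j ∈ univ.erase i, F i j = ∑ i, g i := by
  have hd2 : ∀ i, (d i : ℝ) * (d i : ℝ) = 1 := fun i => by
    rcases hd i with h | h <;> simp [h]
  have hcast : (∑ i, (d i : ℝ)) = 0 := by
    rw [← Int.cast_sum, hdsum, Int.cast_zero]
  have hsum : ∀ i : Fin N, ∑ j ∈ univ.erase i, (d j : ℝ) = -(d i : ℝ) := by
    intro i
    rw [Finset.sum_erase_eq_sub (Finset.mem_univ i), hcast]; ring
  have key : (2 : ℝ) * (∑ i, ∑ j ∈ univ.erase i, F i j) = 2 * ∑ i, g i := by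
    have e1 : (2:ℝ) * (∑ i, ∑ j ∈ univ.erase i, F i j)
        = ∑ i, ∑ j ∈ univ.erase i, (F i j + F j i) := by
      rw [two_mul]
      nth_rewrite 2 [← swapSum F]
      rw [← Finset.sum_add_distrib]
      exact Finset.sum_congr rfl fun i _ => (Finset.sum_add_distrib).symm
    rw [e1]
    have e2 : ∀ i : Fin N, ∑ j ∈ univ.erase i, (F i j + F j i)
        = ∑ j ∈ univ.erase i, (-((d i : ℝ) * g i) * (d j : ℝ)
            + (-(d i : ℝ)) * ((d j : ℝ) * g j)) := by
      intro i
      refine Finset.sum_congr rfl fun j hj => ?_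
      rw [hF i j (Ne.symm (Finset.mem_erase.1 hj).1)]; ring
    have e3 : ∀ i : Fin N, ∑ j ∈ univ.erase i, (-((d i : ℝ) * g i) * (d j : ℝ)
            + (-(d i : ℝ)) * ((d j : ℝ) * g j))
        = 2 * g i - (d i : ℝ) * ∑ j, (d j : ℝ) * g j := by
      intro i
      rw [Finset.sum_add_distrib, ← Finset.mul_sum, ← Finset.mul_sum, hsum i,
        Finset.sum_erase_eq_sub (Finset.mem_univ i)]
      linear_combination (2 * g i) * hd2 i
    calc ∑ i, ∑ j ∈ univ.erase i, (F i j + F j i)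
        = ∑ i, (2 * g i - (d i : ℝ) * ∑ j, (d j : ℝ) * g j) := by
          rw [Finset.sum_congr rfl fun i _ => (e2 i).trans (e3 i)]
      _ = 2 * ∑ i, g i := by
          rw [Finset.sum_sub_distrib, ← Finset.mul_sum, ← Finset.sum_mul, hcast]
          ring
  linarith [key]

lemma nsq2 (x : EuclideanSpace ℝ (Fin 2)) : ‖x‖ ^ 2 = x 0 ^ 2 + x 1 ^ 2 := by
  rw [EuclideanSpace.norm_eq, Real.sq_sqrt (by positivity)]
  simp [Fin.sum_univ_two, sq_abs]

lemma sumE_apply {ι m : Type*} [Fintype m] (s : Finset ι)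
    (f : ι → EuclideanSpace ℝ m) (k : m) :
    (∑ i ∈ s, f i) k = ∑ i ∈ s, f i k :=
  map_sum (EuclideanSpace.proj (𝕜 := ℝ) k) f s

lemma coordDeriv {f : ℝ → EuclideanSpace ℝ (Fin 2)} {v : EuclideanSpace ℝ (Fin 2)}
    {s : Set ℝ} {t : ℝ} (h : HasDerivWithinAt f v s t) (k : Fin 2) :
    HasDerivWithinAt (fun u => f u k) (v k) s t :=
  (EuclideanSpace.proj (𝕜 := ℝ) k).hasFDerivAt.comp_hasDerivWithinAt t h
lemma sph_apply0 (x : E2) : sph x 0 = 2 * x 0 / (1 + (x 0 ^ 2 + x 1 ^ 2)) := by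
  rw [← nsq2]; rfl

lemma sph_apply1 (x : E2) : sph x 1 = 2 * x 1 / (1 + (x 0 ^ 2 + x 1 ^ 2)) := by
  rw [← nsq2]; rfl

lemma sph_apply2 (x : E2) : sph x 2 = (x 0 ^ 2 + x 1 ^ 2 - 1) / (1 + (x 0 ^ 2 + x 1 ^ 2)) := by
  rw [← nsq2]; rfl

/-- Core algebraic identity for the first (and by symmetry second) coordinate. -/
lemma alg_core1 {N : ℕ} (d : Fin N → ℤ) (hd : ∀ i, d i = 1 ∨ d i = -1)
    (hdsum : ∑ i, d i = 0) (A B Sa Sb va vb : Fin N → ℝ)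
    (hS : ∀ i j, i ≠ j → (A i - A j) ^ 2 + (B i - B j) ^ 2 ≠ 0)
    (hSa : ∀ i, Sa i = ∑ j ∈ univ.erase i,
      (d j : ℝ) * (((A i - A j) ^ 2 + (B i - B j) ^ 2)⁻¹ * (A i - A j)))
    (hSb : ∀ i, Sb i = ∑ j ∈ univ.erase i,
      (d j : ℝ) * (((A i - A j) ^ 2 + (B i - B j) ^ 2)⁻¹ * (B i - B j)))
    (hva : ∀ i, va i = ((1 + (A i ^ 2 + B i ^ 2)) ^ 2 / 2) *
      ((1 + (A i ^ 2 + B i ^ 2))⁻¹ * A i + (d i : ℝ) * Sa i))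
    (hvb : ∀ i, vb i = ((1 + (A i ^ 2 + B i ^ 2)) ^ 2 / 2) *
      ((1 + (A i ^ 2 + B i ^ 2))⁻¹ * B i + (d i : ℝ) * Sb i)) :
    ∑ i, (2 * va i * (1 + (A i ^ 2 + B i ^ 2))
        - 2 * A i * (2 * A i * va i + 2 * B i * vb i)) / (1 + (A i ^ 2 + B i ^ 2)) ^ 2
      = ∑ i, 2 * A i / (1 + (A i ^ 2 + B i ^ 2)) := by
  have hR : ∀ i, (1 + (A i ^ 2 + B i ^ 2)) ≠ 0 := fun i => by positivity
  have step : ∀ i, (2 * va i * (1 + (A i ^ 2 + B i ^ 2))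
        - 2 * A i * (2 * A i * va i + 2 * B i * vb i)) / (1 + (A i ^ 2 + B i ^ 2)) ^ 2
      = 2 * A i / (1 + (A i ^ 2 + B i ^ 2))
        + (-A i + (((1 + (A i ^ 2 + B i ^ 2)) - 2 * A i ^ 2) * ((d i : ℝ) * Sa i)
            - 2 * A i * B i * ((d i : ℝ) * Sb i))) := by
    intro i
    rw [hva i, hvb i]
    field_simp
    ring
  rw [Finset.sum_congr rfl fun i _ => step i, Finset.sum_add_distrib]
  have key : ∑ i, (-A i + (((1 + (A i ^ 2 + B i ^ 2)) - 2 * A i ^ 2) * ((d i : ℝ) * Sa i)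
      - 2 * A i * B i * ((d i : ℝ) * Sb i))) = 0 := by
    have expand : ∀ i, ((1 + (A i ^ 2 + B i ^ 2)) - 2 * A i ^ 2) * ((d i : ℝ) * Sa i)
        - 2 * A i * B i * ((d i : ℝ) * Sb i)
        = ∑ j ∈ univ.erase i, (d i : ℝ) * (d j : ℝ) *
            (((1 + (A i ^ 2 + B i ^ 2)) * (A i - A j)
              - 2 * A i * (A i * (A i - A j) + B i * (B i - B j)))
              / ((A i - A j) ^ 2 + (B i - B j) ^ 2)) := by
      intro i
      rw [hSa i, hSb i, Finset.mul_sum, Finset.mul_sum, Finset.mul_sum, Finset.mul_sum,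
        ← Finset.sum_sub_distrib]
      refine Finset.sum_congr rfl fun j _ => ?_
      rw [div_eq_mul_inv]; ring
    rw [Finset.sum_add_distrib, Finset.sum_congr rfl fun i _ => expand i]
    rw [pair_sum d hd hdsum _ A ?hF]
    · simp [Finset.sum_add_distrib, Finset.sum_neg_distrib]
    case hF =>
      intro i j hij
      have h1 := hS i j hij
      have h2 : (A j - A i) ^ 2 + (B j - B i) ^ 2 = (A i - A j) ^ 2 + (B i - B j) ^ 2 := by ring
      rw [h2]
      field_simp
      ring
  rw [key, add_zero]

/-- Core algebraic identity for the third coordinate. -/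
lemma alg_core3 {N : ℕ} (d : Fin N → ℤ) (hd : ∀ i, d i = 1 ∨ d i = -1)
    (hdsum : ∑ i, d i = 0) (A B Sa Sb va vb : Fin N → ℝ)
    (hS : ∀ i j, i ≠ j → (A i - A j) ^ 2 + (B i - B j) ^ 2 ≠ 0)
    (hSa : ∀ i, Sa i = ∑ j ∈ univ.erase i,
      (d j : ℝ) * (((A i - A j) ^ 2 + (B i - B j) ^ 2)⁻¹ * (A i - A j)))
    (hSb : ∀ i, Sb i = ∑ j ∈ univ.erase i,
      (d j : ℝ) * (((A i - A j) ^ 2 + (B i - B j) ^ 2)⁻¹ * (B i - B j)))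
    (hva : ∀ i, va i = ((1 + (A i ^ 2 + B i ^ 2)) ^ 2 / 2) *
      ((1 + (A i ^ 2 + B i ^ 2))⁻¹ * A i + (d i : ℝ) * Sa i))
    (hvb : ∀ i, vb i = ((1 + (A i ^ 2 + B i ^ 2)) ^ 2 / 2) *
      ((1 + (A i ^ 2 + B i ^ 2))⁻¹ * B i + (d i : ℝ) * Sb i)) :
    ∑ i, ((2 * A i * va i + 2 * B i * vb i) * (1 + (A i ^ 2 + B i ^ 2))
        - (A i ^ 2 + B i ^ 2 - 1) * (2 * A i * va i + 2 * B i * vb i))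
          / (1 + (A i ^ 2 + B i ^ 2)) ^ 2
      = ∑ i, (A i ^ 2 + B i ^ 2 - 1) / (1 + (A i ^ 2 + B i ^ 2)) := by
  have hR : ∀ i, (1 + (A i ^ 2 + B i ^ 2)) ≠ 0 := fun i => by positivity
  have step : ∀ i, ((2 * A i * va i + 2 * B i * vb i) * (1 + (A i ^ 2 + B i ^ 2))
        - (A i ^ 2 + B i ^ 2 - 1) * (2 * A i * va i + 2 * B i * vb i))
          / (1 + (A i ^ 2 + B i ^ 2)) ^ 2
      = (A i ^ 2 + B i ^ 2 - 1) / (1 + (A i ^ 2 + B i ^ 2))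
        + (1 + (2 * A i * ((d i : ℝ) * Sa i) + 2 * B i * ((d i : ℝ) * Sb i))) := by
    intro i
    rw [hva i, hvb i]
    field_simp
    ring
  rw [Finset.sum_congr rfl fun i _ => step i, Finset.sum_add_distrib]
  have key : ∑ i, ((1:ℝ) + (2 * A i * ((d i : ℝ) * Sa i) + 2 * B i * ((d i : ℝ) * Sb i))) = 0 := by
    have expand : ∀ i, 2 * A i * ((d i : ℝ) * Sa i) + 2 * B i * ((d i : ℝ) * Sb i)
        = ∑ j ∈ univ.erase i, (d i : ℝ) * (d j : ℝ) *
            ((2 * (A i * (A i - A j) + B i * (B i - B j)))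
              / ((A i - A j) ^ 2 + (B i - B j) ^ 2)) := by
      intro i
      rw [hSa i, hSb i, Finset.mul_sum, Finset.mul_sum, Finset.mul_sum, Finset.mul_sum,
        ← Finset.sum_add_distrib]
      refine Finset.sum_congr rfl fun j _ => ?_
      rw [div_eq_mul_inv]; ring
    rw [Finset.sum_add_distrib, Finset.sum_congr rfl fun i _ => expand i]
    rw [pair_sum d hd hdsum _ (fun _ => (-1 : ℝ)) ?hF]
    · simp
    case hF =>
      intro i j hij
      have h1 := hS i j hij
      have h2 : (A j - A i) ^ 2 + (B j - B i) ^ 2 = (A i - A j) ^ 2 + (B i - B j) ^ 2 := by ring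
      rw [h2]
      field_simp
      ring
  rw [key, add_zero]

/-- Second-coordinate version, derived from `alg_core1` by symmetry. -/
lemma alg_core2 {N : ℕ} (d : Fin N → ℤ) (hd : ∀ i, d i = 1 ∨ d i = -1)
    (hdsum : ∑ i, d i = 0) (A B Sa Sb va vb : Fin N → ℝ)
    (hS : ∀ i j, i ≠ j → (A i - A j) ^ 2 + (B i - B j) ^ 2 ≠ 0)
    (hSa : ∀ i, Sa i = ∑ j ∈ univ.erase i,
      (d j : ℝ) * (((A i - A j) ^ 2 + (B i - B j) ^ 2)⁻¹ * (A i - A j)))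
    (hSb : ∀ i, Sb i = ∑ j ∈ univ.erase i,
      (d j : ℝ) * (((A i - A j) ^ 2 + (B i - B j) ^ 2)⁻¹ * (B i - B j)))
    (hva : ∀ i, va i = ((1 + (A i ^ 2 + B i ^ 2)) ^ 2 / 2) *
      ((1 + (A i ^ 2 + B i ^ 2))⁻¹ * A i + (d i : ℝ) * Sa i))
    (hvb : ∀ i, vb i = ((1 + (A i ^ 2 + B i ^ 2)) ^ 2 / 2) *
      ((1 + (A i ^ 2 + B i ^ 2))⁻¹ * B i + (d i : ℝ) * Sb i)) :
    ∑ i, (2 * vb i * (1 + (A i ^ 2 + B i ^ 2))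
        - 2 * B i * (2 * A i * va i + 2 * B i * vb i)) / (1 + (A i ^ 2 + B i ^ 2)) ^ 2
      = ∑ i, 2 * B i / (1 + (A i ^ 2 + B i ^ 2)) := by
  have hS' : ∀ i j, i ≠ j → (B i - B j) ^ 2 + (A i - A j) ^ 2 ≠ 0 := by
    intro i j hij
    rw [add_comm]; exact hS i j hij
  have hSb' : ∀ i, Sb i = ∑ j ∈ univ.erase i,
      (d j : ℝ) * (((B i - B j) ^ 2 + (A i - A j) ^ 2)⁻¹ * (B i - B j)) := by
    intro i
    rw [hSb i]
    exact Finset.sum_congr rfl fun j _ => by rw [add_comm ((A i - A j) ^ 2)]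
  have hSa' : ∀ i, Sa i = ∑ j ∈ univ.erase i,
      (d j : ℝ) * (((B i - B j) ^ 2 + (A i - A j) ^ 2)⁻¹ * (A i - A j)) := by
    intro i
    rw [hSa i]
    exact Finset.sum_congr rfl fun j _ => by rw [add_comm ((A i - A j) ^ 2)]
  have hvb' : ∀ i, vb i = ((1 + (B i ^ 2 + A i ^ 2)) ^ 2 / 2) *
      ((1 + (B i ^ 2 + A i ^ 2))⁻¹ * B i + (d i : ℝ) * Sb i) := by
    intro i; rw [hvb i]; ring_nf
  have hva' : ∀ i, va i = ((1 + (B i ^ 2 + A i ^ 2)) ^ 2 / 2) *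
      ((1 + (B i ^ 2 + A i ^ 2))⁻¹ * A i + (d i : ℝ) * Sa i) := by
    intro i; rw [hva i]; ring_nf
  have h := alg_core1 d hd hdsum B A Sb Sa vb va hS' hSb' hSa' hvb' hva'
  calc ∑ i, (2 * vb i * (1 + (A i ^ 2 + B i ^ 2))
        - 2 * B i * (2 * A i * va i + 2 * B i * vb i)) / (1 + (A i ^ 2 + B i ^ 2)) ^ 2
      = ∑ i, (2 * vb i * (1 + (B i ^ 2 + A i ^ 2))
        - 2 * B i * (2 * B i * vb i + 2 * A i * va i)) / (1 + (B i ^ 2 + A i ^ 2)) ^ 2 :=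
        Finset.sum_congr rfl fun i _ => by ring
    _ = ∑ i, 2 * B i / (1 + (B i ^ 2 + A i ^ 2)) := h
    _ = ∑ i, 2 * B i / (1 + (A i ^ 2 + B i ^ 2)) :=
        Finset.sum_congr rfl fun i _ => by ring

lemma deriv_V (n : ℕ) (T : ℝ) (p : Fin (2*n) → ℝ → E2) (d : Fin (2*n) → ℤ)
    (hd : ∀ i, d i = 1 ∨ d i = -1) (hdsum : ∑ i, d i = 0)
    (hdist : ∀ t ∈ Set.Ico (0:ℝ) T, ∀ i j, i ≠ j → p i t ≠ p j t)
    (hode : ∀ t ∈ Set.Ico (0:ℝ) T, ∀ i,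
      HasDerivWithinAt (p i) (pvVel d (fun j => p j t) i) (Set.Ico (0:ℝ) T) t)
    {t : ℝ} (ht : t ∈ Set.Ico (0:ℝ) T) :
    HasDerivWithinAt (fun u => ∑ i, sph (p i u)) (∑ i, sph (p i t))
      (Set.Ico (0:ℝ) T) t := by
  have hc : ∀ i (k : Fin 2), HasDerivWithinAt (fun u => p i u k)
      (pvVel d (fun j => p j t) i k) (Set.Ico (0:ℝ) T) t :=
    fun i k => coordDeriv (hode t ht i) k
  have hS : ∀ i j : Fin (2*n), i ≠ j →
      (p i t 0 - p j t 0) ^ 2 + (p i t 1 - p j t 1) ^ 2 ≠ 0 := by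
    intro i j hij
    have hE : (p i t 0 - p j t 0) ^ 2 + (p i t 1 - p j t 1) ^ 2 = ‖p i t - p j t‖ ^ 2 := by
      rw [nsq2]; simp [PiLp.sub_apply]
    rw [hE]
    exact pow_ne_zero 2 (norm_ne_zero_iff.mpr (sub_ne_zero.mpr (hdist t ht i j hij)))
  have hvel : ∀ i (k : Fin 2), pvVel d (fun j => p j t) i k
      = ((1 + (p i t 0 ^ 2 + p i t 1 ^ 2)) ^ 2 / 2) *
        ((1 + (p i t 0 ^ 2 + p i t 1 ^ 2))⁻¹ * p i t k +
          (d i : ℝ) * ∑ j ∈ univ.erase i, (d j : ℝ) *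
            ((((p i t 0 - p j t 0) ^ 2 + (p i t 1 - p j t 1) ^ 2))⁻¹ * (p i t k - p j t k))) := by
    intro i k
    rw [pvVel_apply]
    simp only [nsq2, PiLp.sub_apply]
  -- numerators and denominators
  have hden : ∀ i, HasDerivWithinAt (fun u => 1 + (p i u 0 ^ 2 + p i u 1 ^ 2))
      (2 * p i t 0 * pvVel d (fun j => p j t) i 0
        + 2 * p i t 1 * pvVel d (fun j => p j t) i 1) (Set.Ico (0:ℝ) T) t := by
    intro i
    have h2 := (((hc i 0).pow 2).add ((hc i 1).pow 2)).const_add 1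
    simpa using h2
  have hRne : ∀ (i : Fin (2*n)), (1 + (p i t 0 ^ 2 + p i t 1 ^ 2)) ≠ 0 := by
    intro i; positivity
  have hf0 : ∀ i, HasDerivWithinAt
      (fun u => 2 * p i u 0 / (1 + (p i u 0 ^ 2 + p i u 1 ^ 2)))
      ((2 * pvVel d (fun j => p j t) i 0 * (1 + (p i t 0 ^ 2 + p i t 1 ^ 2))
        - 2 * p i t 0 * (2 * p i t 0 * pvVel d (fun j => p j t) i 0
          + 2 * p i t 1 * pvVel d (fun j => p j t) i 1))
        / (1 + (p i t 0 ^ 2 + p i t 1 ^ 2)) ^ 2) (Set.Ico (0:ℝ) T) t :=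
    fun i => ((hc i 0).const_mul 2).div (hden i) (hRne i)
  have hf1 : ∀ i, HasDerivWithinAt
      (fun u => 2 * p i u 1 / (1 + (p i u 0 ^ 2 + p i u 1 ^ 2)))
      ((2 * pvVel d (fun j => p j t) i 1 * (1 + (p i t 0 ^ 2 + p i t 1 ^ 2))
        - 2 * p i t 1 * (2 * p i t 0 * pvVel d (fun j => p j t) i 0
          + 2 * p i t 1 * pvVel d (fun j => p j t) i 1))
        / (1 + (p i t 0 ^ 2 + p i t 1 ^ 2)) ^ 2) (Set.Ico (0:ℝ) T) t :=
    fun i => ((hc i 1).const_mul 2).div (hden i) (hRne i)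
  have hf2 : ∀ i, HasDerivWithinAt
      (fun u => (p i u 0 ^ 2 + p i u 1 ^ 2 - 1) / (1 + (p i u 0 ^ 2 + p i u 1 ^ 2)))
      (((2 * p i t 0 * pvVel d (fun j => p j t) i 0
          + 2 * p i t 1 * pvVel d (fun j => p j t) i 1)
            * (1 + (p i t 0 ^ 2 + p i t 1 ^ 2))
        - (p i t 0 ^ 2 + p i t 1 ^ 2 - 1) * (2 * p i t 0 * pvVel d (fun j => p j t) i 0
          + 2 * p i t 1 * pvVel d (fun j => p j t) i 1))
        / (1 + (p i t 0 ^ 2 + p i t 1 ^ 2)) ^ 2) (Set.Ico (0:ℝ) T) t := by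
    intro i
    have hnum : HasDerivWithinAt (fun u => p i u 0 ^ 2 + p i u 1 ^ 2 - 1)
        (2 * p i t 0 * pvVel d (fun j => p j t) i 0
          + 2 * p i t 1 * pvVel d (fun j => p j t) i 1) (Set.Ico (0:ℝ) T) t := by
      simpa using (((hc i 0).pow 2).add ((hc i 1).pow 2)).sub_const 1
    exact hnum.div (hden i) (hRne i)
  -- the三 algebraic identities
  have alg0 := alg_core1 d hd hdsum (fun i => p i t 0) (fun i => p i t 1)
    (fun i => ∑ j ∈ univ.erase i, (d j : ℝ) *
      ((((p i t 0 - p j t 0) ^ 2 + (p i t 1 - p j t 1) ^ 2))⁻¹ * (p i t 0 - p j t 0)))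
    (fun i => ∑ j ∈ univ.erase i, (d j : ℝ) *
      ((((p i t 0 - p j t 0) ^ 2 + (p i t 1 - p j t 1) ^ 2))⁻¹ * (p i t 1 - p j t 1)))
    (fun i => pvVel d (fun j => p j t) i 0) (fun i => pvVel d (fun j => p j t) i 1)
    hS (fun i => rfl) (fun i => rfl) (fun i => hvel i 0) (fun i => hvel i 1)
  have alg1 := alg_core2 d hd hdsum (fun i => p i t 0) (fun i => p i t 1)
    (fun i => ∑ j ∈ univ.erase i, (d j : ℝ) *
      ((((p i t 0 - p j t 0) ^ 2 + (p i t 1 - p j t 1) ^ 2))⁻¹ * (p i t 0 - p j t 0)))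
    (fun i => ∑ j ∈ univ.erase i, (d j : ℝ) *
      ((((p i t 0 - p j t 0) ^ 2 + (p i t 1 - p j t 1) ^ 2))⁻¹ * (p i t 1 - p j t 1)))
    (fun i => pvVel d (fun j => p j t) i 0) (fun i => pvVel d (fun j => p j t) i 1)
    hS (fun i => rfl) (fun i => rfl) (fun i => hvel i 0) (fun i => hvel i 1)
  have alg2 := alg_core3 d hd hdsum (fun i => p i t 0) (fun i => p i t 1)
    (fun i => ∑ j ∈ univ.erase i, (d j : ℝ) *
      ((((p i t 0 - p j t 0) ^ 2 + (p i t 1 - p j t 1) ^ 2))⁻¹ * (p i t 0 - p j t 0)))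
    (fun i => ∑ j ∈ univ.erase i, (d j : ℝ) *
      ((((p i t 0 - p j t 0) ^ 2 + (p i t 1 - p j t 1) ^ 2))⁻¹ * (p i t 1 - p j t 1)))
    (fun i => pvVel d (fun j => p j t) i 0) (fun i => pvVel d (fun j => p j t) i 1)
    hS (fun i => rfl) (fun i => rfl) (fun i => hvel i 0) (fun i => hvel i 1)
  -- coordinatewise derivatives of the sum
  have hD0 : HasDerivWithinAt (fun u => ∑ i, sph (p i u) 0) (∑ i, sph (p i t) 0)
      (Set.Ico (0:ℝ) T) t := by
    simp only [sph_apply0]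
    rw [← alg0]
    exact HasDerivWithinAt.fun_sum (fun i _ => hf0 i)
  have hD1 : HasDerivWithinAt (fun u => ∑ i, sph (p i u) 1) (∑ i, sph (p i t) 1)
      (Set.Ico (0:ℝ) T) t := by
    simp only [sph_apply1]
    rw [← alg1]
    exact HasDerivWithinAt.fun_sum (fun i _ => hf1 i)
  have hD2 : HasDerivWithinAt (fun u => ∑ i, sph (p i u) 2) (∑ i, sph (p i t) 2)
      (Set.Ico (0:ℝ) T) t := by
    simp only [sph_apply2]
    rw [← alg2]
    exact HasDerivWithinAt.fun_sum (fun i _ => hf2 i)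
  -- assemble
  have hpi : HasDerivWithinAt (fun u (k : Fin 3) => ∑ i, sph (p i u) k)
      (fun k => ∑ i, sph (p i t) k) (Set.Ico (0:ℝ) T) t := by
    rw [hasDerivWithinAt_pi]
    intro k
    fin_cases k
    · exact hD0
    · exact hD1
    · exact hD2
  have hL := ((PiLp.continuousLinearEquiv 2 ℝ (fun _ : Fin 3 => ℝ)).symm.toContinuousLinearMap).hasFDerivAt.comp_hasDerivWithinAt t hpi
  have hfun : (fun u => ∑ i, sph (p i u))
      = fun u => (PiLp.continuousLinearEquiv 2 ℝ (fun _ : Fin 3 => ℝ)).symm.toContinuousLinearMap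
          (fun k => ∑ i, sph (p i u) k) := by
    funext u
    ext k
    exact sumE_apply univ (fun i => sph (p i u)) k
  have hval : (∑ i, sph (p i t))
      = (PiLp.continuousLinearEquiv 2 ℝ (fun _ : Fin 3 => ℝ)).symm.toContinuousLinearMap
          (fun k => ∑ i, sph (p i t) k) := by
    ext k
    exact sumE_apply univ (fun i => sph (p i t)) k
  rw [hfun, hval]
  exact hL
end Auxiliary


/-- For a solution of the planar point-vortex gradient flow, the sum `V₀` of the sphere
points satisfies `V₀(t) = eᵗ • V₀(0)`; consequently if `V₀(0) ≠ 0` the unit vector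
`V₀(t)/‖V₀(t)‖` is constant (conservation of the center of mass direction). -/
theorem sum_sphere_points_exp_growth
    (n : ℕ) (hn : 1 ≤ n) (T : ℝ)
    (p : Fin (2 * n) → ℝ → E2) (d : Fin (2 * n) → ℤ)
    (hd : ∀ i, d i = 1 ∨ d i = -1) (hdsum : ∑ i, d i = 0)
    (hdist : ∀ t ∈ Set.Ico (0 : ℝ) T, ∀ i j, i ≠ j → p i t ≠ p j t)
    (hode : ∀ t ∈ Set.Ico (0 : ℝ) T, ∀ i,
      HasDerivWithinAt (p i) (pvVel d (fun j => p j t) i) (Set.Ico (0 : ℝ) T) t) :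
    (∀ t ∈ Set.Ico (0 : ℝ) T,
        ∑ i, sph (p i t) = Real.exp t • ∑ i, sph (p i 0)) ∧
    ((∑ i, sph (p i 0)) ≠ 0 → ∀ t ∈ Set.Ico (0 : ℝ) T,
        ‖∑ i, sph (p i t)‖⁻¹ • ∑ i, sph (p i t)
          = ‖∑ i, sph (p i 0)‖⁻¹ • ∑ i, sph (p i 0)) := by
  have part1 : ∀ t ∈ Set.Ico (0 : ℝ) T,
      ∑ i, sph (p i t) = Real.exp t • ∑ i, sph (p i 0) := by
    intro t ht
    have hT0 : (0:ℝ) ∈ Set.Ico (0:ℝ) T := ⟨le_refl 0, lt_of_le_of_lt ht.1 ht.2⟩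
    have hV : ∀ u ∈ Set.Ico (0:ℝ) T,
        HasDerivWithinAt (fun y => ∑ i, sph (p i y)) (∑ i, sph (p i u))
          (Set.Ico (0:ℝ) T) u :=
      fun u hu => deriv_V n T p d hd hdsum hdist hode hu
    have hg : ∀ u ∈ Set.Ico (0:ℝ) T,
        HasDerivWithinAt (fun y => Real.exp (-y) • ∑ i, sph (p i y)) ((0:E3))
          (Set.Ico (0:ℝ) T) u := by
      intro u hu
      have hc : HasDerivWithinAt (fun y => Real.exp (-y)) (-Real.exp (-u))
          (Set.Ico (0:ℝ) T) u := by
        simpa using (hasDerivAt_neg u).exp.hasDerivWithinAt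
      have h2 := hc.smul (hV u hu)
      have h0 : Real.exp (-u) • ∑ i, sph (p i u) + (-Real.exp (-u)) • ∑ i, sph (p i u)
          = (0:E3) := by
        rw [neg_smul]; simp
      rw [h0] at h2
      exact h2
    have hconst := (convex_Ico (0:ℝ) T).norm_image_sub_le_of_norm_hasDerivWithin_le
        (C := 0) (f' := fun _ => (0:E3)) hg (fun u _ => by simp) hT0 ht
    have heq : Real.exp (-t) • ∑ i, sph (p i t) - Real.exp (-(0:ℝ)) • ∑ i, sph (p i 0)
        = 0 := by
      have hn2 : ‖Real.exp (-t) • ∑ i, sph (p i t)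
          - Real.exp (-(0:ℝ)) • ∑ i, sph (p i 0)‖ ≤ 0 := by simpa using hconst
      exact norm_le_zero_iff.mp hn2
    have heq2 : Real.exp (-t) • ∑ i, sph (p i t) = ∑ i, sph (p i 0) := by
      have := sub_eq_zero.mp heq
      simpa using this
    have h3 : Real.exp t • (Real.exp (-t) • ∑ i, sph (p i t))
        = Real.exp t • ∑ i, sph (p i 0) := by rw [heq2]
    rw [smul_smul, ← Real.exp_add] at h3
    simpa using h3
  refine ⟨part1, ?_⟩
  intro hne t ht
  rw [part1 t ht, norm_smul, Real.norm_eq_abs, abs_of_pos (Real.exp_pos t), smul_smul]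
  have hW : ‖∑ i, sph (p i 0)‖ ≠ 0 := norm_ne_zero_iff.mpr hne
  have hkey : (Real.exp t * ‖∑ i, sph (p i 0)‖)⁻¹ * Real.exp t
      = ‖∑ i, sph (p i 0)‖⁻¹ := by
    field_simp
  rw [hkey]
end
end

section
/- Let p_1,…,p_{2n} ∈ ℝ² be pairwise distinct points which form an equilibrium of the planar point-vortex gradient flow, i.e. p_i/(1+r_i²) + d_i Σ_{j≠i} d_j (p_i − p_j)/|p_i − p_j|² = 0 for every i = 1,…,2n, where r_i² = |p_i|². Then the corresponding sphere points satisfy Σ_{i=1}^{2n} P_i = 0; that is, V₀ = 0 is a necessary condition for an equilibrium of the flow. -/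
open Finset RealInnerProductSpace

noncomputable section

/-- Evaluation of a finite sum in Euclidean space at a coordinate. -/
lemma euclid_sum_apply {N m : ℕ} (x : Fin N → EuclideanSpace ℝ (Fin m)) (k : Fin m) :
    (∑ i, x i) k = ∑ i, x i k :=
  map_sum (EuclideanSpace.proj k : EuclideanSpace ℝ (Fin m) →L[ℝ] ℝ) x univ

/-- Double sum of an antisymmetric map vanishes (over an ℝ-module). -/
lemma sum_sum_antisym {N : ℕ} {M : Type*} [AddCommGroup M] [Module ℝ M]
    (f : Fin N → Fin N → M) (ha : ∀ i j, f i j = - f j i) :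
    ∑ i, ∑ j, f i j = 0 := by
  have h2 : (∑ i, ∑ j, f i j) + (∑ i, ∑ j, f i j) = 0 := by
    nth_rewrite 1 [Finset.sum_comm]
    rw [← Finset.sum_add_distrib]
    refine Finset.sum_eq_zero fun i _ => ?_
    rw [← Finset.sum_add_distrib]
    refine Finset.sum_eq_zero fun j _ => ?_
    rw [ha j i]; abel
  have h3 : (2 : ℝ) • (∑ i, ∑ j, f i j) = 0 := by
    rw [two_smul]; exact h2
  rcases smul_eq_zero.mp h3 with h | h
  · norm_num at h
  · exact h

/-- `V₀ = 0` is a necessary condition for an equilibrium of the planar point-vortex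
gradient flow: if pairwise distinct points form an equilibrium, the sum of the
corresponding sphere points vanishes. -/
theorem equilibrium_sum_sphere_points_eq_zero
    (n : ℕ) (hn : 1 ≤ n)
    (q : Fin (2 * n) → E2) (d : Fin (2 * n) → ℤ)
    (hd : ∀ i, d i = 1 ∨ d i = -1) (hdsum : ∑ i, d i = 0)
    (hdist : ∀ i j, i ≠ j → q i ≠ q j)
    (heq : ∀ i, (1 + ‖q i‖ ^ 2)⁻¹ • q i +
      (d i : ℝ) • ∑ j ∈ univ.erase i, (d j : ℝ) • (‖q i - q j‖ ^ 2)⁻¹ • (q i - q j) = 0) :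
    ∑ i, sph (q i) = 0 := by
  classical
  have hpos : ∀ i, (0:ℝ) < 1 + ‖q i‖ ^ 2 := fun i => by positivity
  have hne : ∀ i, (1 + ‖q i‖ ^ 2 : ℝ) ≠ 0 := fun i => (hpos i).ne'
  have hnd : ∀ i j, i ≠ j → (‖q i - q j‖ ^ 2 : ℝ) ≠ 0 := by
    intro i j h
    exact pow_ne_zero 2 (norm_ne_zero_iff.mpr (sub_ne_zero_of_ne (hdist i j h)))
  have hd1 : ∀ i, (d i : ℝ) ^ 2 = 1 := by
    intro i; rcases hd i with h | h <;> simp [h]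
  have hds : ∑ i, (d i : ℝ) = 0 := by
    have : ((∑ i, d i : ℤ) : ℝ) = 0 := by rw [hdsum]; simp
    push_cast at this; exact this
  -- the antisymmetric vector field
  set F : Fin (2 * n) → Fin (2 * n) → E2 := fun i j =>
    (d i : ℝ) • (d j : ℝ) • (‖q i - q j‖ ^ 2)⁻¹ • (q i - q j) with hF
  have hFdiag : ∀ i, F i i = 0 := by intro i; simp [hF]
  have hFanti : ∀ i j, F i j = - F j i := by
    intro i j
    have h1 : q j - q i = -(q i - q j) := by abel
    simp only [hF, h1, norm_neg, smul_neg, neg_neg, smul_smul]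
    congr 1; ring
  -- Step 1: sum of equations
  have hA : ∑ i, (1 + ‖q i‖ ^ 2)⁻¹ • q i = 0 := by
    have h0 : ∑ i, ((1 + ‖q i‖ ^ 2)⁻¹ • q i +
        (d i : ℝ) • ∑ j ∈ univ.erase i, (d j : ℝ) • (‖q i - q j‖ ^ 2)⁻¹ • (q i - q j)) = 0 :=
      Finset.sum_eq_zero fun i _ => heq i
    rw [Finset.sum_add_distrib] at h0
    have h1 : ∀ i : Fin (2 * n), (d i : ℝ) • ∑ j ∈ univ.erase i,
        (d j : ℝ) • (‖q i - q j‖ ^ 2)⁻¹ • (q i - q j) = ∑ j, F i j := by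
      intro i
      rw [Finset.smul_sum]
      exact Finset.sum_erase _ (hFdiag i)
    rw [Finset.sum_congr rfl fun i _ => h1 i, sum_sum_antisym F hFanti, add_zero] at h0
    exact h0
  -- Step 2: pair each equation with q i
  set H : Fin (2 * n) → Fin (2 * n) → ℝ := fun i j =>
    (d i : ℝ) * ((d j : ℝ) * ((‖q i - q j‖ ^ 2)⁻¹ * ⟪q i - q j, q i⟫)) with hH
  have hHdiag : ∀ i, H i i = 0 := by intro i; simp [hH]
  have hinner : ∀ i, (1 + ‖q i‖ ^ 2)⁻¹ * ‖q i‖ ^ 2 + ∑ j, H i j = 0 := by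
    intro i
    have h := congrArg (fun v : E2 => ⟪v, q i⟫) (heq i)
    simp only [inner_add_left, real_inner_smul_left, sum_inner, inner_zero_left,
      real_inner_self_eq_norm_sq] at h
    rw [Finset.mul_sum] at h
    have h1 : ∑ j ∈ univ.erase i, (d i : ℝ) *
        ((d j : ℝ) * ((‖q i - q j‖ ^ 2)⁻¹ * ⟪q i - q j, q i⟫)) = ∑ j, H i j :=
      Finset.sum_erase _ (hHdiag i)
    rw [h1] at h
    exact h
  have key : ∀ i j, i ≠ j → H i j + H j i = (d i : ℝ) * (d j : ℝ) := by
    intro i j hij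
    have h1 : q j - q i = -(q i - q j) := by abel
    have h2 : ⟪q i - q j, q i⟫ - ⟪q i - q j, q j⟫ = ‖q i - q j‖ ^ 2 := by
      rw [← inner_sub_right, real_inner_self_eq_norm_sq]
    have hvv : (‖q i - q j‖ ^ 2)⁻¹ * (‖q i - q j‖ ^ 2) = 1 := inv_mul_cancel₀ (hnd i j hij)
    simp only [hH, h1, norm_neg, inner_neg_left]
    linear_combination ((d i : ℝ) * (d j : ℝ) * (‖q i - q j‖ ^ 2)⁻¹) * h2
      + ((d i : ℝ) * (d j : ℝ)) * hvv
  -- total of the pairing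
  have hT : (∑ i, ∑ j, H i j) = -(n : ℝ) := by
    have h2 : (∑ i, ∑ j, H i j) + (∑ i, ∑ j, H i j)
        = ∑ i, ∑ j, (if i = j then 0 else (d i : ℝ) * (d j : ℝ)) := by
      nth_rewrite 1 [Finset.sum_comm]
      rw [← Finset.sum_add_distrib]
      refine Finset.sum_congr rfl fun i _ => ?_
      rw [← Finset.sum_add_distrib]
      refine Finset.sum_congr rfl fun j _ => ?_
      by_cases h : i = j
      · simp [h, hHdiag]
      · rw [if_neg h, add_comm]
        exact key i j h
    have h4 : ∀ i : Fin (2 * n), ∑ j, (if i = j then 0 else (d i : ℝ) * (d j : ℝ)) = -1 := by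
      intro i
      have h5 : ∑ j, (if i = j then (0:ℝ) else (d i : ℝ) * (d j : ℝ))
          = ∑ j, ((d i : ℝ) * (d j : ℝ) - if i = j then (d i : ℝ) * (d j : ℝ) else 0) := by
        refine Finset.sum_congr rfl fun j _ => ?_
        by_cases h : i = j <;> simp [h]
      rw [h5, Finset.sum_sub_distrib, ← Finset.mul_sum, hds, mul_zero,
        Finset.sum_ite_eq, if_pos (mem_univ i)]
      have := hd1 i; nlinarith
    rw [Finset.sum_congr rfl fun i _ => h4 i, Finset.sum_const] at h2
    simp only [Finset.card_univ, Fintype.card_fin, nsmul_eq_mul] at h2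
    push_cast at h2 ⊢
    linarith
  have hB : ∑ i, (1 + ‖q i‖ ^ 2)⁻¹ * ‖q i‖ ^ 2 = (n : ℝ) := by
    have h0 : ∑ i, ((1 + ‖q i‖ ^ 2)⁻¹ * ‖q i‖ ^ 2 + ∑ j, H i j) = 0 :=
      Finset.sum_eq_zero fun i _ => hinner i
    rw [Finset.sum_add_distrib, hT] at h0
    linarith
  have hC : ∑ i, (1 + ‖q i‖ ^ 2)⁻¹ = (n : ℝ) := by
    have h0 : ∀ i : Fin (2 * n), (1 + ‖q i‖ ^ 2)⁻¹
        = 1 - (1 + ‖q i‖ ^ 2)⁻¹ * ‖q i‖ ^ 2 := by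
      intro i; field_simp; ring
    rw [Finset.sum_congr rfl fun i _ => h0 i, Finset.sum_sub_distrib, hB,
      Finset.sum_const]
    simp only [Finset.card_univ, Fintype.card_fin, nsmul_eq_mul, mul_one]
    push_cast
    ring
  -- coordinates of hA
  have hA0 : ∑ i, (1 + ‖q i‖ ^ 2)⁻¹ * q i 0 = 0 := by
    have h := congrArg (fun v : E2 => v 0) hA
    simp only [euclid_sum_apply, PiLp.smul_apply, smul_eq_mul, PiLp.zero_apply] at h
    exact h
  have hA1 : ∑ i, (1 + ‖q i‖ ^ 2)⁻¹ * q i 1 = 0 := by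
    have h := congrArg (fun v : E2 => v 1) hA
    simp only [euclid_sum_apply, PiLp.smul_apply, smul_eq_mul, PiLp.zero_apply] at h
    exact h
  -- finish coordinatewise
  ext k
  rw [euclid_sum_apply]
  have hsph : ∀ (i : Fin (2 * n)) (k : Fin 3), sph (q i) k =
      (![2 * q i 0 / (1 + ‖q i‖ ^ 2), 2 * q i 1 / (1 + ‖q i‖ ^ 2),
        (‖q i‖ ^ 2 - 1) / (1 + ‖q i‖ ^ 2)] : Fin 3 → ℝ) k := fun i k => rfl
  rw [Finset.sum_congr rfl fun i _ => hsph i k]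
  fin_cases k
  · have goal0 : ∑ i, 2 * q i 0 / (1 + ‖q i‖ ^ 2) = (0:ℝ) := by
      have h : ∑ i, 2 * q i 0 / (1 + ‖q i‖ ^ 2)
          = 2 * ∑ i, (1 + ‖q i‖ ^ 2)⁻¹ * q i 0 := by
        rw [Finset.mul_sum]
        exact Finset.sum_congr rfl fun i _ => by ring
      rw [h, hA0, mul_zero]
    exact goal0
  · have goal1 : ∑ i, 2 * q i 1 / (1 + ‖q i‖ ^ 2) = (0:ℝ) := by
      have h : ∑ i, 2 * q i 1 / (1 + ‖q i‖ ^ 2)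
          = 2 * ∑ i, (1 + ‖q i‖ ^ 2)⁻¹ * q i 1 := by
        rw [Finset.mul_sum]
        exact Finset.sum_congr rfl fun i _ => by ring
      rw [h, hA1, mul_zero]
    exact goal1
  · have goal2 : ∑ i, (‖q i‖ ^ 2 - 1) / (1 + ‖q i‖ ^ 2) = (0:ℝ) := by
      have h : ∑ i, (‖q i‖ ^ 2 - 1) / (1 + ‖q i‖ ^ 2)
          = ∑ i, ((1 + ‖q i‖ ^ 2)⁻¹ * ‖q i‖ ^ 2 - (1 + ‖q i‖ ^ 2)⁻¹) := by
        refine Finset.sum_congr rfl fun i _ => ?_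
        have := hne i
        field_simp
      rw [h, Finset.sum_sub_distrib, hB, hC, sub_self]
    exact goal2
end
end

section
/- Let p_1,…,p_{2n} : [0,T₁) → ℝ² be a solution of the planar point-vortex gradient flow with T₁ < ∞. Let I ⊆ {1,…,2n} with |I| ≥ 2 be such that p_i(t) → 0 as t → T₁⁻ for every i ∈ I, and suppose there is δ > 0 with |p_j(t)| ≥ δ for all j ∉ I and all t ∈ [0,T₁). Assume the total colliding degree is nonzero: Σ_{i∈I} d_i ≠ 0, write l = |Σ_{i∈I} d_i|, and let k be the number of indices in I whose degree has the minority sign (so I contains k vortices of one sign and k+l of the opposite sign). Then C(k,2) + C(k+l,2) − k(k+l) < 1, where C(a,2) = a(a−1)/2 (with C(0,2) = C(1,2) = 0). In particular, the colliding vortices cannot all have degrees of one sign. -/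
open Finset

noncomputable section

open scoped RealInnerProductSpace

lemma two_mul_choose_two (m : ℕ) : 2 * (m.choose 2 : ℤ) = m * (m - 1) := by
  induction m with
  | zero => simp
  | succ m ih =>
    have h : (m + 1).choose 2 = m.choose 1 + m.choose 2 := Nat.choose_succ_succ m 1
    rw [h]
    push_cast [Nat.choose_one_right]
    push_cast at ih
    ring_nf
    ring_nf at ih
    linarith

open Filter in
lemma collision_sq_le {N : ℕ} {T₁ : ℝ} (hT₁ : 0 < T₁)
    {p : Fin N → ℝ → E2} {d : Fin N → ℤ}
    (hd : ∀ i, d i = 1 ∨ d i = -1)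
    (hdist : ∀ t ∈ Set.Ico (0 : ℝ) T₁, ∀ i j, i ≠ j → p i t ≠ p j t)
    (hode : ∀ t ∈ Set.Ico (0 : ℝ) T₁, ∀ i,
      HasDerivWithinAt (p i) (pvVel d (fun j => p j t) i) (Set.Ico (0 : ℝ) T₁) t)
    {I : Finset (Fin N)}
    (hcollide : ∀ i ∈ I, Tendsto (p i) (nhdsWithin T₁ (Set.Iio T₁)) (nhds 0))
    {δ : ℝ} (hδ : 0 < δ)
    (haway : ∀ j ∉ I, ∀ t ∈ Set.Ico (0 : ℝ) T₁, δ ≤ ‖p j t‖) :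
    (∑ i ∈ I, d i) ^ 2 ≤ (I.card : ℤ) := by
  by_contra hcon
  push_neg at hcon
  set s : Set ℝ := Set.Ico (0 : ℝ) T₁ with hs
  set L : Filter ℝ := nhdsWithin T₁ (Set.Iio T₁) with hL
  set Sr : ℝ := (((∑ i ∈ I, d i) ^ 2 : ℤ) - (I.card : ℤ)) / 2 with hSrdef
  have hSr : (1 : ℝ) / 2 ≤ Sr := by
    have h1 : (1 : ℤ) ≤ (∑ i ∈ I, d i) ^ 2 - (I.card : ℤ) := by omega
    have h2 : (1 : ℝ) ≤ ((∑ i ∈ I, d i) ^ 2 : ℤ) - (I.card : ℤ) := by exact_mod_cast h1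
    rw [hSrdef]; linarith
  set Q : ℝ → ℝ := fun t => ∑ i ∈ I, ‖p i t‖ ^ 2 / (1 + ‖p i t‖ ^ 2) with hQdef
  set g : ℝ → Fin N → Fin N → ℝ := fun t i j =>
    ((d i : ℝ) * (d j : ℝ)) * (⟪p i t, p i t - p j t⟫ / ‖p i t - p j t‖ ^ 2) with hgdef
  set C : ℝ → ℝ := fun t => ∑ i ∈ I, ∑ j ∈ Iᶜ, g t i j with hCdef
  have hQnonneg : ∀ t, 0 ≤ Q t := by
    intro t; apply Finset.sum_nonneg; intro i _; positivity
  -- derivative of Q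
  have hQ' : ∀ t ∈ s, HasDerivWithinAt Q (Q t + Sr + C t) s t := by
    intro t ht
    have hterm : ∀ i ∈ I, HasDerivWithinAt (fun τ => ‖p i τ‖ ^ 2 / (1 + ‖p i τ‖ ^ 2))
        (2 * ⟪p i t, pvVel d (fun j => p j t) i⟫ / (1 + ‖p i t‖ ^ 2) ^ 2) s t := by
      intro i _
      have hn : HasDerivWithinAt (fun τ => ‖p i τ‖ ^ 2)
          (2 * ⟪p i t, pvVel d (fun j => p j t) i⟫) s t := by
        have h := HasDerivWithinAt.inner ℝ (hode t ht i) (hode t ht i)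
        simp only [real_inner_self_eq_norm_sq] at h
        have e : ⟪pvVel d (fun j => p j t) i, p i t⟫ = ⟪p i t, pvVel d (fun j => p j t) i⟫ :=
          real_inner_comm _ _
        rw [e, ← two_mul] at h
        exact h
      have hden : HasDerivWithinAt (fun τ => 1 + ‖p i τ‖ ^ 2)
          (2 * ⟪p i t, pvVel d (fun j => p j t) i⟫) s t := hn.const_add 1
      have hne0 : (1 + ‖p i t‖ ^ 2) ≠ 0 := by positivity
      have h2 := hn.div hden hne0
      have e2 : 2 * ⟪p i t, pvVel d (fun j => p j t) i⟫ / (1 + ‖p i t‖ ^ 2) ^ 2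
          = (2 * ⟪p i t, pvVel d (fun j => p j t) i⟫ * (1 + ‖p i t‖ ^ 2)
            - ‖p i t‖ ^ 2 * (2 * ⟪p i t, pvVel d (fun j => p j t) i⟫)) / (1 + ‖p i t‖ ^ 2) ^ 2 := by
        ring
      rw [e2]
      exact h2
    have hsum := HasDerivWithinAt.fun_sum hterm
    have hexp : ∀ i ∈ I, 2 * ⟪p i t, pvVel d (fun j => p j t) i⟫ / (1 + ‖p i t‖ ^ 2) ^ 2
        = ‖p i t‖ ^ 2 / (1 + ‖p i t‖ ^ 2) + ∑ j ∈ univ.erase i, g t i j := by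
      intro i _
      have hne0 : (1 + ‖p i t‖ ^ 2) ≠ 0 := by positivity
      rw [pvVel]
      simp only [real_inner_smul_right, inner_add_right, inner_sum,
        real_inner_self_eq_norm_sq]
      have hrhs : ∑ j ∈ univ.erase i, g t i j =
          (d i : ℝ) * ∑ j ∈ univ.erase i,
            (d j : ℝ) * ((‖p i t - p j t‖ ^ 2)⁻¹ * ⟪p i t, p i t - p j t⟫) := by
        rw [Finset.mul_sum]
        refine Finset.sum_congr rfl fun j _ => ?_
        rw [hgdef]
        field_simp
      rw [hrhs]
      field_simp
    have hsplit : ∀ i ∈ I, ∑ j ∈ univ.erase i, g t i j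
        = ∑ j ∈ I.erase i, g t i j + ∑ j ∈ Iᶜ, g t i j := by
      intro i hi
      have hdisj : Disjoint (I.erase i) Iᶜ :=
        Finset.disjoint_left.mpr fun a ha haC =>
          (Finset.mem_compl.mp haC) (Finset.mem_of_mem_erase ha)
      rw [← Finset.sum_union hdisj]
      apply Finset.sum_congr _ fun _ _ => rfl
      ext j
      simp only [Finset.mem_erase, Finset.mem_union, Finset.mem_compl, Finset.mem_univ,
        and_true]
      constructor
      · intro hj
        by_cases hjI : j ∈ I
        · exact Or.inl ⟨hj, hjI⟩
        · exact Or.inr hjI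
      · rintro (⟨hj, _⟩ | hj)
        · exact hj
        · intro hji; exact hj (hji ▸ hi)
    have hsym : ∑ i ∈ I, ∑ j ∈ I.erase i, g t i j = Sr := by
      have hswap : ∑ i ∈ I, ∑ j ∈ I.erase i, g t i j
          = ∑ i ∈ I, ∑ j ∈ I.erase i, g t j i := by
        apply Finset.sum_comm' (t := fun x => I.erase x) (s' := fun y => I.erase y) (t' := I)
        intro x y
        simp only [Finset.mem_erase]
        constructor
        · rintro ⟨hx, hy1, hy2⟩; exact ⟨⟨fun h => hy1 h.symm, hx⟩, hy2⟩
        · rintro ⟨⟨hx1, hx2⟩, hy⟩; exact ⟨hx2, fun h => hx1 h.symm, hy⟩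
      have hpair : ∀ i ∈ I, ∀ j ∈ I.erase i, g t i j + g t j i = (d i : ℝ) * (d j : ℝ) := by
        intro i hi j hj
        obtain ⟨hji, hjI⟩ := Finset.mem_erase.mp hj
        have hnep : p i t ≠ p j t := hdist t ht i j hji.symm
        have hx : ‖p i t - p j t‖ ≠ 0 := by
          simpa [sub_eq_zero] using hnep
        have hm : ‖p i t - p j t‖ ^ 2 ≠ 0 := pow_ne_zero 2 hx
        have key : ⟪p i t, p i t - p j t⟫ + ⟪p j t, p j t - p i t⟫
            = ‖p i t - p j t‖ ^ 2 := by
          rw [inner_sub_right, inner_sub_right, norm_sub_sq_real,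
            real_inner_self_eq_norm_sq, real_inner_self_eq_norm_sq, real_inner_comm]
          ring
        rw [hgdef]
        simp only []
        rw [norm_sub_rev (p j t) (p i t)]
        have heq : (d i : ℝ) * (d j : ℝ) * (⟪p i t, p i t - p j t⟫ / ‖p i t - p j t‖ ^ 2)
            + (d j : ℝ) * (d i : ℝ) * (⟪p j t, p j t - p i t⟫ / ‖p i t - p j t‖ ^ 2)
            = (d i : ℝ) * (d j : ℝ)
              * ((⟪p i t, p i t - p j t⟫ + ⟪p j t, p j t - p i t⟫)
                  / ‖p i t - p j t‖ ^ 2) := by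
          ring
        rw [heq, key, div_self hm, mul_one]
      have h2S : 2 * ∑ i ∈ I, ∑ j ∈ I.erase i, g t i j
          = ∑ i ∈ I, ∑ j ∈ I.erase i, ((d i : ℝ) * (d j : ℝ)) := by
        have hh : 2 * ∑ i ∈ I, ∑ j ∈ I.erase i, g t i j
            = ∑ i ∈ I, ∑ j ∈ I.erase i, g t i j + ∑ i ∈ I, ∑ j ∈ I.erase i, g t j i := by
          rw [← hswap]; ring
        rw [hh, ← Finset.sum_add_distrib]
        refine Finset.sum_congr rfl fun i hi => ?_
        rw [← Finset.sum_add_distrib]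
        exact Finset.sum_congr rfl fun j hj => hpair i hi j hj
      have hdd : ∑ i ∈ I, ∑ j ∈ I.erase i, ((d i : ℝ) * (d j : ℝ))
          = ((∑ i ∈ I, d i : ℤ) : ℝ) ^ 2 - (I.card : ℝ) := by
        have hsq : ∀ i ∈ I, ((d i : ℝ)) ^ 2 = 1 := by
          intro i _; rcases hd i with h | h <;> rw [h] <;> norm_num
        have hinner : ∀ i ∈ I, ∑ j ∈ I.erase i, ((d i : ℝ) * (d j : ℝ))
            = (d i : ℝ) * ((∑ j ∈ I, (d j : ℝ)) - (d i : ℝ)) := by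
          intro i hi
          rw [← Finset.mul_sum, Finset.sum_erase_eq_sub hi]
        rw [Finset.sum_congr rfl hinner]
        have hexpand : ∑ i ∈ I, (d i : ℝ) * ((∑ j ∈ I, (d j : ℝ)) - (d i : ℝ))
            = (∑ i ∈ I, (d i : ℝ)) ^ 2 - ∑ i ∈ I, ((d i : ℝ)) ^ 2 := by
          have hh2 : ∀ i ∈ I, (d i : ℝ) * ((∑ j ∈ I, (d j : ℝ)) - (d i : ℝ))
              = (d i : ℝ) * (∑ j ∈ I, (d j : ℝ)) - ((d i : ℝ)) ^ 2 := fun i _ => by ring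
          rw [Finset.sum_congr rfl hh2, Finset.sum_sub_distrib]
          congr 1
          rw [← Finset.sum_mul]; ring
        rw [hexpand, Finset.sum_congr rfl hsq, Finset.sum_const, nsmul_eq_mul, mul_one]
        push_cast
        ring
      rw [hdd] at h2S
      rw [hSrdef]
      push_cast
      push_cast at h2S
      linarith
    have hiden : ∑ i ∈ I, 2 * ⟪p i t, pvVel d (fun j => p j t) i⟫ / (1 + ‖p i t‖ ^ 2) ^ 2
        = Q t + Sr + C t := by
      rw [Finset.sum_congr rfl hexp, Finset.sum_add_distrib,
        Finset.sum_congr rfl hsplit, Finset.sum_add_distrib, hsym]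
      simp only [hQdef, hCdef]
      ring
    rw [← hiden]
    exact hsum
  -- Q tends to 0
  have hQ0 : Tendsto Q L (nhds 0) := by
    have : Tendsto Q L (nhds (∑ i ∈ I, (0 : ℝ))) := by
      apply tendsto_finset_sum
      intro i hi
      have hcont : Continuous fun x : E2 => ‖x‖ ^ 2 / (1 + ‖x‖ ^ 2) :=
        Continuous.div (continuous_norm.pow 2) (continuous_const.add (continuous_norm.pow 2))
          fun x => by positivity
      have := (hcont.tendsto 0).comp (hcollide i hi)
      simpa [Function.comp_def] using this
    simpa using this
  -- C tends to 0
  have hC0 : Tendsto C L (nhds 0) := by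
    have : Tendsto C L (nhds (∑ i ∈ I, ∑ j ∈ Iᶜ, (0 : ℝ))) := by
      apply tendsto_finset_sum
      intro i hi
      apply tendsto_finset_sum
      intro j hj
      have hjI : j ∉ I := Finset.mem_compl.mp hj
      -- squeeze
      apply squeeze_zero_norm' (a := fun t => (2 / δ) * ‖p i t‖)
      · -- eventual bound
        have hev1 : ∀ᶠ t in L, ‖p i t‖ < δ / 2 := by
          have hball : Metric.ball (0 : E2) (δ / 2) ∈ nhds (0 : E2) :=
            Metric.ball_mem_nhds _ (by positivity)
          filter_upwards [(hcollide i hi).eventually_mem hball] with t ht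
          simpa [dist_zero_right] using ht
        have hev2 : ∀ᶠ t in L, t ∈ Set.Ioo 0 T₁ := by
          rw [hL]
          exact Ioo_mem_nhdsLT_of_mem ⟨hT₁, le_refl T₁⟩
        filter_upwards [hev1, hev2] with t h1 h2
        have hts : t ∈ s := ⟨le_of_lt h2.1, h2.2⟩
        have hpj : δ ≤ ‖p j t‖ := haway j hjI t hts
        have hdist2 : δ / 2 ≤ ‖p i t - p j t‖ := by
          have := norm_sub_norm_le (p j t) (p i t)
          have h3 : ‖p j t - p i t‖ = ‖p i t - p j t‖ := norm_sub_rev _ _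
          linarith
        have hmpos : (0 : ℝ) < ‖p i t - p j t‖ := by linarith
        have hdi : |(d i : ℝ)| = 1 := by rcases hd i with h | h <;> rw [h] <;> norm_num
        have hdj : |(d j : ℝ)| = 1 := by rcases hd j with h | h <;> rw [h] <;> norm_num
        have hinner : |⟪p i t, p i t - p j t⟫| ≤ ‖p i t‖ * ‖p i t - p j t‖ :=
          abs_real_inner_le_norm _ _
        rw [hgdef]
        simp only [Real.norm_eq_abs]
        rw [abs_mul, abs_mul, hdi, hdj, one_mul, one_mul, abs_div, abs_pow, abs_norm]
        calc |⟪p i t, p i t - p j t⟫| / ‖p i t - p j t‖ ^ 2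
            ≤ (‖p i t‖ * ‖p i t - p j t‖) / ‖p i t - p j t‖ ^ 2 := by
              apply div_le_div_of_nonneg_right hinner
              positivity
          _ = ‖p i t‖ / ‖p i t - p j t‖ := by
              rw [sq]
              rw [mul_div_mul_right _ _ (ne_of_gt hmpos)]
          _ ≤ ‖p i t‖ / (δ / 2) := by
              apply div_le_div_of_nonneg_left (norm_nonneg _) (by positivity) hdist2
          _ = 2 / δ * ‖p i t‖ := by
              field_simp
      · have : Tendsto (fun t => ‖p i t‖) L (nhds 0) := by
          have := (hcollide i hi).norm
          simpa using this
        simpa using this.const_mul (2 / δ)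
    simpa using this
  -- eventually the derivative is at least 1/4
  have hev : ∀ᶠ t in L, t ∈ Set.Ioo 0 T₁ ∧ |Q t + C t| < 1 / 4 := by
    have h1 : ∀ᶠ t in L, t ∈ Set.Ioo 0 T₁ := by
      rw [hL]; exact Ioo_mem_nhdsLT_of_mem ⟨hT₁, le_refl T₁⟩
    have h2 : ∀ᶠ t in L, |Q t + C t| < 1 / 4 := by
      have hQC : Tendsto (fun t => Q t + C t) L (nhds 0) := by
        simpa using hQ0.add hC0
      have := Metric.tendsto_nhds.mp hQC (1 / 4) (by norm_num)
      filter_upwards [this] with t ht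
      simpa [Real.dist_eq] using ht
    exact h1.and h2
  -- extract an interval
  rw [hL] at hev
  obtain ⟨l₀, hl₀, hsub⟩ := mem_nhdsLT_iff_exists_Ioo_subset.mp hev
  set u : ℝ := (max l₀ 0 + T₁) / 2 with hudef
  have hmaxlt : max l₀ 0 < T₁ := max_lt hl₀ hT₁
  have hul : l₀ < u := by
    have : l₀ ≤ max l₀ 0 := le_max_left _ _
    rw [hudef]; linarith
  have hu0 : 0 < u := by
    have : (0 : ℝ) ≤ max l₀ 0 := le_max_right _ _
    rw [hudef]; linarith
  have huT : u < T₁ := by rw [hudef]; linarith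
  -- the function h := Q - t/4 is monotone on [u, T₁)
  have hmono : MonotoneOn (fun t => Q t - t / 4) (Set.Ico u T₁) := by
    apply monotoneOn_of_hasDerivWithinAt_nonneg (f' := fun t => Q t + Sr + C t - 1 / 4)
      (convex_Ico u T₁)
    · intro t ht
      have hts : t ∈ s := ⟨le_of_lt (lt_of_lt_of_le hu0 ht.1), ht.2⟩
      have hsub2 : Set.Ico u T₁ ⊆ s := fun x hx => ⟨le_of_lt (lt_of_lt_of_le hu0 hx.1), hx.2⟩
      exact (((hQ' t hts).continuousWithinAt).mono hsub2).sub
        ((continuous_id.div_const 4).continuousWithinAt)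
    · intro t ht
      rw [interior_Ico] at ht
      have hts : t ∈ s := ⟨le_of_lt (lt_trans hu0 ht.1), ht.2⟩
      have hsub2 : Set.Ioo u T₁ ⊆ s := fun x hx => ⟨le_of_lt (lt_trans hu0 hx.1), hx.2⟩
      rw [interior_Ico]
      exact ((hQ' t hts).mono hsub2).sub
        ((hasDerivWithinAt_id t _).div_const 4)
    · intro t ht
      rw [interior_Ico] at ht
      have htIoo : t ∈ Set.Ioo l₀ T₁ := ⟨lt_trans hul ht.1, ht.2⟩
      have hP := hsub htIoo
      have habs := hP.2
      rw [abs_lt] at habs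
      linarith [hSr, habs.1]
  -- conclude: Q t ≥ Q u + (t - u)/4 for t in [u, T₁)
  have hlow : ∀ t ∈ Set.Ico u T₁, Q u + (t - u) / 4 ≤ Q t := by
    intro t ht
    have huIco : u ∈ Set.Ico u T₁ := ⟨le_refl u, huT⟩
    have := hmono huIco ht ht.1
    simp only at this
    linarith
  -- take the limit t → T₁⁻
  have hlim : Tendsto (fun t => Q u + (t - u) / 4) L (nhds (Q u + (T₁ - u) / 4)) := by
    have hc : Continuous fun t : ℝ => Q u + (t - u) / 4 :=
      continuous_const.add ((continuous_id.sub continuous_const).div_const 4)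
    exact (hc.tendsto T₁).mono_left nhdsWithin_le_nhds
  have hevle : ∀ᶠ t in L, Q u + (t - u) / 4 ≤ Q t := by
    have h1 : ∀ᶠ t in L, t ∈ Set.Ioo u T₁ := by
      rw [hL]; exact Ioo_mem_nhdsLT_of_mem ⟨huT, le_refl T₁⟩
    filter_upwards [h1] with t ht
    exact hlow t ⟨le_of_lt ht.1, ht.2⟩
  have hfinal : Q u + (T₁ - u) / 4 ≤ 0 := le_of_tendsto_of_tendsto hlim hQ0 hevle
  have := hQnonneg u
  linarith

/-- At a collision of the planar point-vortex gradient flow with nonzero total colliding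
degree `l`, if `k` is the number of colliding vortices of the minority sign, then
`C(k,2) + C(k+l,2) - k(k+l) < 1`; in particular the colliding vortices cannot all have
degrees of one sign. -/
theorem colliding_degrees_constraint
    (n : ℕ) (hn : 1 ≤ n) (T₁ : ℝ) (hT₁ : 0 < T₁)
    (p : Fin (2 * n) → ℝ → E2) (d : Fin (2 * n) → ℤ)
    (hd : ∀ i, d i = 1 ∨ d i = -1) (hdsum : ∑ i, d i = 0)
    (hdist : ∀ t ∈ Set.Ico (0 : ℝ) T₁, ∀ i j, i ≠ j → p i t ≠ p j t)
    (hode : ∀ t ∈ Set.Ico (0 : ℝ) T₁, ∀ i,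
      HasDerivWithinAt (p i) (pvVel d (fun j => p j t) i) (Set.Ico (0 : ℝ) T₁) t)
    (I : Finset (Fin (2 * n))) (hI : 2 ≤ I.card)
    (hcollide : ∀ i ∈ I,
      Filter.Tendsto (p i) (nhdsWithin T₁ (Set.Iio T₁)) (nhds 0))
    (δ : ℝ) (hδ : 0 < δ)
    (haway : ∀ j ∉ I, ∀ t ∈ Set.Ico (0 : ℝ) T₁, δ ≤ ‖p j t‖)
    (hne : (∑ i ∈ I, d i) ≠ 0)
    (l : ℕ) (hl : (l : ℤ) = |∑ i ∈ I, d i|)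
    (k : ℕ) (hk : k = min (I.filter fun i => d i = 1).card (I.filter fun i => d i = -1).card) :
    (k.choose 2 : ℤ) + ((k + l).choose 2 : ℤ) - (k : ℤ) * (k + l : ℤ) < 1 ∧
    (∃ i ∈ I, d i = 1) ∧ (∃ i ∈ I, d i = -1) := by
  have key : (∑ i ∈ I, d i) ^ 2 ≤ (I.card : ℤ) :=
    collision_sq_le hT₁ hd hdist hode hcollide hδ haway
  set a := (I.filter fun i => d i = 1).card with ha
  set b := (I.filter fun i => d i = -1).card with hb
  have hfilter : I.filter (fun i => d i = -1) = I.filter (fun i => ¬ d i = 1) := by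
    apply Finset.filter_congr
    intro i _
    rcases hd i with h | h <;> simp [h]
  have hab : a + b = I.card := by
    rw [ha, hb, hfilter]
    have := Finset.card_filter_add_card_filter_not (s := I) (p := fun i => d i = 1)
    convert this using 2
  have hsum : ∑ i ∈ I, d i = (a : ℤ) - b := by
    rw [← Finset.sum_filter_add_sum_filter_not I (fun i => d i = 1)]
    have h1 : ∑ i ∈ I.filter (fun i => d i = 1), d i = (a : ℤ) := by
      rw [Finset.sum_congr rfl (fun i hi => (Finset.mem_filter.mp hi).2)]
      simp [ha]
    have h2 : ∑ i ∈ I.filter (fun i => ¬ d i = 1), d i = -(b : ℤ) := by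
      rw [← hfilter]
      rw [Finset.sum_congr rfl (fun i hi => (Finset.mem_filter.mp hi).2)]
      simp [hb]
    rw [h1, h2]
    ring
  rw [hsum] at key hl hne
  have hcard : (I.card : ℤ) = (a : ℤ) + b := by exact_mod_cast hab.symm
  rw [hcard] at key
  refine ⟨?_, ?_, ?_⟩
  · -- the inequality
    have c1 := two_mul_choose_two k
    have c2 := two_mul_choose_two (k + l)
    rcases le_total a b with h | h
    · have hk2 : k = a := by rw [hk]; exact min_eq_left h
      have hlval : (l : ℤ) = (b : ℤ) - a := by
        rw [hl, abs_of_nonpos (by push_cast; omega)]; ring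
      have hkl : k + l = b := by omega
      have hz : (k : ℤ) + (l : ℤ) = b := by omega
      rw [hkl] at c2
      rw [hk2] at c1
      rw [hkl, hk2]
      nlinarith [key, c1, c2]
    · have hk2 : k = b := by rw [hk]; exact min_eq_right h
      have hlval : (l : ℤ) = (a : ℤ) - b := by
        rw [hl, abs_of_nonneg (by push_cast; omega)]
      have hkl : k + l = a := by omega
      have hz : (k : ℤ) + (l : ℤ) = a := by omega
      rw [hkl] at c2
      rw [hk2] at c1
      rw [hkl, hk2]
      nlinarith [key, c1, c2]
  · by_contra hno
    push_neg at hno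
    have hall : ∀ i ∈ I, d i = -1 := fun i hi => (hd i).resolve_left (hno i hi)
    have ha0 : a = 0 := by
      rw [ha, Finset.card_eq_zero]
      apply Finset.filter_eq_empty_iff.mpr
      intro i hi
      rw [hall i hi]
      norm_num
    have hI2 : (2 : ℤ) ≤ (a : ℤ) + b := by
      have : (2 : ℤ) ≤ (I.card : ℤ) := by exact_mod_cast hI
      omega
    rw [ha0] at key hI2
    push_cast at key hI2
    nlinarith [key]
  · by_contra hno
    push_neg at hno
    have hall : ∀ i ∈ I, d i = 1 := fun i hi => (hd i).resolve_right (hno i hi)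
    have hb0 : b = 0 := by
      rw [hb, Finset.card_eq_zero]
      apply Finset.filter_eq_empty_iff.mpr
      intro i hi
      rw [hall i hi]
      norm_num
    have hI2 : (2 : ℤ) ≤ (a : ℤ) + b := by
      have : (2 : ℤ) ≤ (I.card : ℤ) := by exact_mod_cast hI
      omega
    rw [hb0] at key hI2
    push_cast at key hI2
    nlinarith [key]
end
end

section
/- Fix 0 ≤ s < 1 with √(1−s²) > (n−1)/n, and let A_s = {(x₁,x₂,x₃) ∈ S² : x₃ ≤ −√(1−s²)}. Suppose the initial sphere points of a continued trajectory of the planar point-vortex gradient flow satisfy P_i(0) ∈ A_s for all i = 1,…,2n. Then the trajectory annihilates all vortices in finite time: it is impossible for a continued trajectory to retain a nonempty set of vortices for all t ≥ 0; after finitely many collision times, occurring before a finite time, no vortices remain. -/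
open Finset
open scoped Classical

noncomputable section

/-- A continued trajectory of the planar point-vortex gradient flow on `S²` (in
stereographic coordinates), starting from `2n` vortices of degrees `±1` summing to zero:
there are collision times `0 = T 0 < T 1 < ⋯ < T m`; on each interval
`[T k, T (k+1))` (and on `[T m, ∞)` for the last stage) the `N k` vortices solve the
point-vortex gradient flow with pairwise distinct positions, extending continuously to the
collision time; at each collision time the vortices are grouped into clusters by
coincidence of limit positions, some cluster has at least two vortices, every cluster has
total degree in `{-1,0,1}` (hypothesis (H)), clusters of total degree `0` are deleted and
clusters of total degree `±1` are replaced by a single vortex of that degree at the common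
limit position (the cluster map is `cl`, sending each old vortex to its successor, or to
`none` if its cluster is annihilated). -/
structure PVTrajectory (n : ℕ) where
  /-- number of collision times -/
  m : ℕ
  /-- `T 0 = 0` and `T 1 < ⋯ < T m` are the collision times -/
  T : ℕ → ℝ
  /-- number of vortices at stage `k` -/
  N : ℕ → ℕ
  /-- degrees of the stage-`k` vortices -/
  deg : (k : ℕ) → Fin (N k) → ℤ
  /-- positions of the stage-`k` vortices -/
  pos : (k : ℕ) → ℝ → Fin (N k) → E2
  /-- limit positions of the stage-`k` vortices as `t → T (k+1)⁻` -/
  lim : (k : ℕ) → Fin (N k) → E2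
  /-- the cluster/successor map at the collision time `T (k+1)` -/
  cl : (k : ℕ) → Fin (N k) → Option (Fin (N (k + 1)))
  T_zero : T 0 = 0
  T_mono : ∀ k < m, T k < T (k + 1)
  N_zero : N 0 = 2 * n
  deg_pm : ∀ k ≤ m, ∀ i, deg k i = 1 ∨ deg k i = -1
  deg_sum : ∀ k ≤ m, ∑ i, deg k i = 0
  distinct : ∀ k < m, ∀ t ∈ Set.Ico (T k) (T (k + 1)),
    ∀ i j : Fin (N k), i ≠ j → pos k t i ≠ pos k t j
  ode : ∀ k < m, ∀ t ∈ Set.Ico (T k) (T (k + 1)), ∀ i : Fin (N k),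
    HasDerivWithinAt (fun s => pos k s i)
      (pvVel (deg k) (fun j => pos k t j) i) (Set.Ico (T k) (T (k + 1))) t
  distinct_last : ∀ t ∈ Set.Ici (T m), ∀ i j : Fin (N m), i ≠ j → pos m t i ≠ pos m t j
  ode_last : ∀ t ∈ Set.Ici (T m), ∀ i : Fin (N m),
    HasDerivWithinAt (fun s => pos m s i)
      (pvVel (deg m) (fun j => pos m t j) i) (Set.Ici (T m)) t
  lim_spec : ∀ k < m, ∀ i : Fin (N k),
    Filter.Tendsto (fun s => pos k s i)
      (nhdsWithin (T (k + 1)) (Set.Iio (T (k + 1)))) (nhds (lim k i))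
  /-- at each collision time some cluster contains at least two vortices -/
  collide : ∀ k < m, ∃ i j : Fin (N k), i ≠ j ∧ lim k i = lim k j
  /-- hypothesis (H): every cluster has total degree in `{-1,0,1}` -/
  hypH : ∀ k < m, ∀ i : Fin (N k),
    (∑ j ∈ univ.filter fun j => lim k j = lim k i, deg k j) ∈ ({-1, 0, 1} : Set ℤ)
  /-- vortices in the same cluster have the same successor -/
  cl_resp : ∀ k < m, ∀ i j : Fin (N k), lim k i = lim k j → cl k i = cl k j
  /-- vortices with the same successor are in the same cluster -/
  cl_inj : ∀ k < m, ∀ i j : Fin (N k), ∀ v : Fin (N (k + 1)),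
    cl k i = some v → cl k j = some v → lim k i = lim k j
  /-- every stage-`(k+1)` vortex arises from a cluster -/
  cl_surj : ∀ k < m, ∀ v : Fin (N (k + 1)), ∃ i : Fin (N k), cl k i = some v
  /-- exactly the clusters of total degree `0` are annihilated -/
  cl_none : ∀ k < m, ∀ i : Fin (N k),
    cl k i = none ↔ (∑ j ∈ univ.filter fun j => lim k j = lim k i, deg k j) = 0
  /-- the successor vortex carries the total degree of its cluster -/
  cl_deg : ∀ k < m, ∀ i : Fin (N k), ∀ v : Fin (N (k + 1)), cl k i = some v →
    deg (k + 1) v = ∑ j ∈ univ.filter fun j => lim k j = lim k i, deg k j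
  /-- the successor vortex starts at the common limit position of its cluster -/
  cl_pos : ∀ k < m, ∀ i : Fin (N k), ∀ v : Fin (N (k + 1)), cl k i = some v →
    pos (k + 1) (T (k + 1)) v = lim k i

section Aux

open scoped RealInnerProductSpace

/-- Third coordinate of the sphere point of `p`. -/
def f2 (p : E2) : ℝ := (‖p‖ ^ 2 - 1) / (1 + ‖p‖ ^ 2)

lemma one_add_sq_pos (p : E2) : 0 < 1 + ‖p‖ ^ 2 := by positivity

lemma neg_one_le_f2 (p : E2) : -1 ≤ f2 p := by
  rw [f2, le_div_iff₀ (one_add_sq_pos p)]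
  nlinarith [sq_nonneg ‖p‖]

lemma continuous_f2 : Continuous f2 := by
  apply Continuous.div
  · fun_prop
  · fun_prop
  · intro p; exact ne_of_gt (one_add_sq_pos p)

lemma hasDerivWithinAt_f2comp {S : Set ℝ} {t : ℝ} {c : ℝ → E2} {v : E2}
    (h : HasDerivWithinAt c v S t) :
    HasDerivWithinAt (fun s => f2 (c s))
      (4 / (1 + ‖c t‖ ^ 2) ^ 2 * ⟪c t, v⟫) S t := by
  have hg : HasDerivWithinAt (fun s => ⟪c s, c s⟫) (2 * ⟪c t, v⟫) S t := by
    have h0 := h.inner ℝ h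
    have h2 : ⟪c t, v⟫ + ⟪v, c t⟫ = 2 * ⟪c t, v⟫ := by
      rw [real_inner_comm v (c t)]; ring
    rwa [h2] at h0
  have hnum : HasDerivWithinAt (fun s => ⟪c s, c s⟫ - 1) (2 * ⟪c t, v⟫) S t := hg.sub_const 1
  have hden : HasDerivWithinAt (fun s => 1 + ⟪c s, c s⟫) (2 * ⟪c t, v⟫) S t := hg.const_add 1
  have hne : (1 : ℝ) + ⟪c t, c t⟫ ≠ 0 := by
    rw [real_inner_self_eq_norm_sq]; exact ne_of_gt (one_add_sq_pos _)
  have := hnum.div hden hne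
  have heq : ∀ s, f2 (c s) = (⟪c s, c s⟫ - 1) / (1 + ⟪c s, c s⟫) := by
    intro s; rw [f2, real_inner_self_eq_norm_sq]
  rw [show (fun s => f2 (c s)) = fun s => (⟪c s, c s⟫ - 1) / (1 + ⟪c s, c s⟫) from funext heq]
  refine this.congr_deriv ?_
  rw [real_inner_self_eq_norm_sq]
  field_simp
  ring

lemma sum_vel_identity {N : ℕ} (d : Fin N → ℤ) (q : Fin N → E2)
    (hd : ∀ i, d i = 1 ∨ d i = -1) (hsum : ∑ i, d i = 0)
    (hdist : ∀ i j : Fin N, i ≠ j → q i ≠ q j) :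
    ∑ i, 4 / (1 + ‖q i‖ ^ 2) ^ 2 * ⟪q i, pvVel d q i⟫ = ∑ i, f2 (q i) := by
  classical
  set c : Fin N → Fin N → ℝ := fun i j =>
    2 * (d i : ℝ) * (d j : ℝ) * ((‖q i - q j‖ ^ 2)⁻¹ * ⟪q i, q i - q j⟫) with hc
  have claim1 : ∀ i, 4 / (1 + ‖q i‖ ^ 2) ^ 2 * ⟪q i, pvVel d q i⟫
      = (1 + f2 (q i)) + ∑ j ∈ univ.erase i, c i j := by
    intro i
    have hC : (1 : ℝ) + ‖q i‖ ^ 2 ≠ 0 := ne_of_gt (one_add_sq_pos _)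
    set A : ℝ := ∑ j ∈ univ.erase i,
      (d j : ℝ) * ((‖q i - q j‖ ^ 2)⁻¹ * ⟪q i, q i - q j⟫) with hA
    have hcA : ∑ j ∈ univ.erase i, c i j = 2 * (d i : ℝ) * A := by
      rw [hA, Finset.mul_sum]
      refine Finset.sum_congr rfl fun j _ => ?_
      rw [hc]; ring
    have key : ⟪q i, pvVel d q i⟫
        = (1 + ‖q i‖ ^ 2) ^ 2 / 2 * ((1 + ‖q i‖ ^ 2)⁻¹ * ‖q i‖ ^ 2 + (d i : ℝ) * A) := by
      rw [pvVel, real_inner_smul_right, inner_add_right, real_inner_smul_right,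
        real_inner_self_eq_norm_sq, real_inner_smul_right, inner_sum]
      simp only [real_inner_smul_right]
      rw [hA]
    rw [key, hcA, f2]
    field_simp
    ring
  rw [Finset.sum_congr rfl fun i _ => claim1 i, Finset.sum_add_distrib]
  have hSswap : ∑ i, ∑ j ∈ univ.erase i, c i j = ∑ i, ∑ j ∈ univ.erase i, c j i := by
    rw [Finset.sum_comm' (s := univ) (t := fun i => univ.erase i) (t' := univ)
      (s' := fun j => univ.erase j)]
    intro i j
    simp [Finset.mem_erase, ne_comm]
  have hpair : ∀ i j : Fin N, i ≠ j → c i j + c j i = 2 * (d i : ℝ) * (d j : ℝ) := by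
    intro i j hij
    have hΔ : ‖q i - q j‖ ^ 2 ≠ 0 :=
      pow_ne_zero _ (norm_ne_zero_iff.2 (sub_ne_zero_of_ne (hdist i j hij)))
    have hrev : ‖q j - q i‖ = ‖q i - q j‖ := norm_sub_rev _ _
    have hin : ⟪q i, q i - q j⟫ + ⟪q j, q j - q i⟫ = ‖q i - q j‖ ^ 2 := by
      rw [inner_sub_right, inner_sub_right, norm_sub_sq_real]
      rw [real_inner_self_eq_norm_sq, real_inner_self_eq_norm_sq, real_inner_comm (q j) (q i)]
      ring
    have hstep : c i j + c j i
        = 2 * (d i : ℝ) * (d j : ℝ) *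
          ((‖q i - q j‖ ^ 2)⁻¹ * (⟪q i, q i - q j⟫ + ⟪q j, q j - q i⟫)) := by
      rw [hc]; simp only [hrev]; ring
    rw [hstep, hin, inv_mul_cancel₀ hΔ, mul_one]
  have hdsumR : ∑ j, (d j : ℝ) = 0 := by exact_mod_cast congrArg (Int.cast : ℤ → ℝ) hsum
  have hdsq : ∀ i, (d i : ℝ) ^ 2 = 1 := by
    intro i; rcases hd i with h | h <;> rw [h] <;> norm_num
  have hS : ∑ i, ∑ j ∈ univ.erase i, c i j = -(N : ℝ) := by
    have h2S : (2 : ℝ) * ∑ i, ∑ j ∈ univ.erase i, c i j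
        = ∑ i, ∑ j ∈ univ.erase i, (c i j + c j i) := by
      rw [Finset.sum_congr rfl fun i _ => Finset.sum_add_distrib]
      rw [Finset.sum_add_distrib, ← hSswap]; ring
    have h2S' : ∑ i, ∑ j ∈ univ.erase i, (c i j + c j i)
        = ∑ i : Fin N, (2 * (d i : ℝ) * (-(d i : ℝ))) := by
      refine Finset.sum_congr rfl fun i _ => ?_
      rw [Finset.sum_congr rfl (fun j hj => hpair i j (by
        rintro rfl; exact (Finset.mem_erase.mp hj).1 rfl))]
      rw [← Finset.mul_sum]
      have : ∑ j ∈ univ.erase i, (d j : ℝ) = -(d i : ℝ) := by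
        have := Finset.add_sum_erase univ (fun j => (d j : ℝ)) (Finset.mem_univ i)
        linarith [hdsumR, this]
      rw [this]
    have : ∑ i : Fin N, (2 * (d i : ℝ) * (-(d i : ℝ))) = -2 * (N : ℝ) := by
      have : ∀ i : Fin N, 2 * (d i : ℝ) * (-(d i : ℝ)) = -2 := by
        intro i; have := hdsq i; nlinarith
      rw [Finset.sum_congr rfl fun i _ => this i]
      simp [Finset.card_univ]
      ring
    linarith [h2S.trans (h2S'.trans this)]
  rw [Finset.sum_add_distrib, hS]
  simp

/-- On a stage, the function `F t = ∑ f2 (pos t i)` satisfies `F' = F`. -/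
lemma stage_deriv {N : ℕ} (d : Fin N → ℤ) (pos : ℝ → Fin N → E2) (S : Set ℝ)
    (hd : ∀ i, d i = 1 ∨ d i = -1) (hsum : ∑ i, d i = 0)
    (hdist : ∀ t ∈ S, ∀ i j : Fin N, i ≠ j → pos t i ≠ pos t j)
    (hode : ∀ t ∈ S, ∀ i : Fin N,
      HasDerivWithinAt (fun s => pos s i) (pvVel d (fun j => pos t j) i) S t) :
    ∀ t ∈ S, HasDerivWithinAt (fun u => ∑ i, f2 (pos u i)) (∑ i, f2 (pos t i)) S t := by
  intro t ht
  have h1 : HasDerivWithinAt (fun u => ∑ i, f2 (pos u i))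
      (∑ i, 4 / (1 + ‖pos t i‖ ^ 2) ^ 2 * ⟪pos t i, pvVel d (pos t) i⟫) S t := by
    apply HasDerivWithinAt.fun_sum
    intro i _
    exact hasDerivWithinAt_f2comp (hode t ht i)
  rwa [sum_vel_identity d (pos t) hd hsum (hdist t ht)] at h1

/-- A function satisfying `F' = F` on a convex set has `F t * exp (-t)` constant. -/
lemma exp_const {S : Set ℝ} (hconv : Convex ℝ S) {F : ℝ → ℝ}
    (hF : ∀ t ∈ S, HasDerivWithinAt F (F t) S t) {a b : ℝ} (ha : a ∈ S) (hb : b ∈ S) :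
    F b * Real.exp (-b) = F a * Real.exp (-a) := by
  have hG : ∀ t ∈ S, HasDerivWithinAt (fun u => F u * Real.exp (-u)) 0 S t := by
    intro t ht
    have he : HasDerivAt (fun u : ℝ => Real.exp (-u)) (-Real.exp (-t)) t := by
      exact ((Real.hasDerivAt_exp (-t)).comp t (hasDerivAt_neg t)).congr_deriv (by ring)
    have := (hF t ht).mul he.hasDerivWithinAt
    refine this.congr_deriv ?_
    ring
  have h0 := Convex.norm_image_sub_le_of_norm_hasDerivWithin_le (C := 0)
    (f' := fun _ => (0 : ℝ)) hG (fun x _ => by simp) hconv ha hb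
  simp only [zero_mul, norm_le_zero_iff, sub_eq_zero] at h0
  exact h0

end Aux

/-- Annihilation theorem: if `√(1-s²) > (n-1)/n` and all `2n` initial sphere points lie in
the polar cap `A_s = {x₃ ≤ -√(1-s²)}`, then a continued trajectory of the point-vortex
gradient flow cannot retain a nonempty set of vortices for all time: after its finitely
many collision times no vortices remain. -/
theorem annihilation_of_clustered_vortices
    (n : ℕ) (hn : 1 ≤ n) (s : ℝ) (hs0 : 0 ≤ s) (hs1 : s < 1)
    (hcap : Real.sqrt (1 - s ^ 2) > ((n : ℝ) - 1) / n)
    (traj : PVTrajectory n)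
    (hinit : ∀ i : Fin (traj.N 0),
      (‖traj.pos 0 0 i‖ ^ 2 - 1) / (1 + ‖traj.pos 0 0 i‖ ^ 2) ≤ -Real.sqrt (1 - s ^ 2)) :
    traj.N traj.m = 0 := by
  classical
  set a : ℝ := Real.sqrt (1 - s ^ 2) with ha
  set m := traj.m
  -- initial value of B
  set B : ℕ → ℝ := fun k => ∑ i, f2 (traj.pos k (traj.T k) i) with hB
  have hnR : (0 : ℝ) < n := by exact_mod_cast hn
  have h2na : 2 * (n : ℝ) * (1 - a) < 2 := by
    have h1 : 1 - a < 1 / n := by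
      rw [ha]
      have := hcap
      rw [sub_div] at this
      have hnn : (n:ℝ)/n = 1 := div_self (ne_of_gt hnR)
      rw [hnn] at this
      linarith
    calc 2 * (n : ℝ) * (1 - a) < 2 * n * (1 / n) := by
          apply mul_lt_mul_of_pos_left h1; positivity
      _ = 2 := by field_simp
  -- key invariant
  have key : ∀ k ≤ m, B k + (traj.N k : ℝ) ≤ 2 * n * (1 - a) := by
    intro k
    induction k with
    | zero =>
      intro _
      have hB0 : B 0 ≤ (traj.N 0 : ℝ) * (-a) := by
        rw [hB]
        calc ∑ i, f2 (traj.pos 0 (traj.T 0) i) ≤ ∑ _i : Fin (traj.N 0), (-a) := by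
              apply Finset.sum_le_sum
              intro i _
              rw [traj.T_zero, f2]
              exact hinit i
          _ = (traj.N 0 : ℝ) * (-a) := by simp [Finset.card_univ, mul_comm]
      have hN0 : (traj.N 0 : ℝ) = 2 * n := by exact_mod_cast traj.N_zero
      rw [hN0] at hB0 ⊢
      nlinarith
    | succ k ih =>
      intro hk1
      have hk : k < m := lt_of_lt_of_le (Nat.lt_succ_self k) hk1
      have ihk := ih (le_of_lt hk)
      -- N k ≥ 2
      have hNk2 : 2 ≤ traj.N k := by
        obtain ⟨i, j, hij, -⟩ := traj.collide k hk
        have : 1 < Fintype.card (Fin (traj.N k)) := Fintype.one_lt_card_iff.2 ⟨i, j, hij⟩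
        simp at this; omega
      have hBkneg : B k < 0 := by
        have : (2 : ℝ) ≤ (traj.N k : ℝ) := by exact_mod_cast hNk2
        linarith
      -- the stage ODE between T k and T (k+1)
      have hTlt := traj.T_mono k hk
      have hIco : Convex ℝ (Set.Ico (traj.T k) (traj.T (k+1))) := convex_Ico _ _
      have hder := stage_deriv (traj.deg k) (traj.pos k) (Set.Ico (traj.T k) (traj.T (k+1)))
        (traj.deg_pm k (le_of_lt hk)) (traj.deg_sum k (le_of_lt hk))
        (traj.distinct k hk) (traj.ode k hk)
      set F : ℝ → ℝ := fun t => ∑ i, f2 (traj.pos k t i) with hF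
      have hTmem : traj.T k ∈ Set.Ico (traj.T k) (traj.T (k+1)) := ⟨le_refl _, hTlt⟩
      -- F t = B k * exp (t - T k) on the interval
      have hFt : ∀ t ∈ Set.Ico (traj.T k) (traj.T (k+1)),
          F t = B k * Real.exp (t - traj.T k) := by
        intro t htmem
        have h := exp_const hIco hder htmem hTmem
        have hBF : B k = F (traj.T k) := rfl
        have hkey : Real.exp (t - traj.T k) * Real.exp (-t) = Real.exp (-traj.T k) := by
          rw [← Real.exp_add]; ring_nf
        refine mul_right_cancel₀ (Real.exp_ne_zero (-t)) ?_
        calc F t * Real.exp (-t) = F (traj.T k) * Real.exp (-traj.T k) := h.symm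
          _ = F (traj.T k) * (Real.exp (t - traj.T k) * Real.exp (-t)) := by rw [hkey]
          _ = B k * Real.exp (t - traj.T k) * Real.exp (-t) := by rw [hBF]; ring
      -- limit of F at T (k+1)
      have hlimF : Filter.Tendsto F (nhdsWithin (traj.T (k+1)) (Set.Iio (traj.T (k+1))))
          (nhds (∑ i, f2 (traj.lim k i))) := by
        apply tendsto_finset_sum
        intro i _
        exact Filter.Tendsto.comp (continuous_f2.continuousAt) (traj.lim_spec k hk i)
      have hlimF2 : Filter.Tendsto F (nhdsWithin (traj.T (k+1)) (Set.Iio (traj.T (k+1))))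
          (nhds (B k * Real.exp (traj.T (k+1) - traj.T k))) := by
        have hcont : Filter.Tendsto (fun t => B k * Real.exp (t - traj.T k))
            (nhdsWithin (traj.T (k+1)) (Set.Iio (traj.T (k+1))))
            (nhds (B k * Real.exp (traj.T (k+1) - traj.T k))) := by
          apply Filter.Tendsto.mono_left _ nhdsWithin_le_nhds
          exact (Continuous.tendsto (by fun_prop) _)
        apply hcont.congr'
        have hIoo : Set.Ioo (traj.T k) (traj.T (k+1)) ∈
            nhdsWithin (traj.T (k+1)) (Set.Iio (traj.T (k+1))) :=
          Ioo_mem_nhdsLT_of_mem ⟨hTlt, le_refl _⟩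
        filter_upwards [hIoo] with t htm
        exact (hFt t ⟨le_of_lt htm.1, htm.2⟩).symm
      have hLeq : ∑ i, f2 (traj.lim k i) = B k * Real.exp (traj.T (k+1) - traj.T k) :=
        tendsto_nhds_unique hlimF hlimF2
      have hLle : ∑ i, f2 (traj.lim k i) ≤ B k := by
        rw [hLeq]
        have h1 : (1 : ℝ) ≤ Real.exp (traj.T (k+1) - traj.T k) :=
          Real.one_le_exp (by linarith)
        nlinarith
      -- collision bookkeeping
      obtain ⟨ι, hι⟩ : ∃ ι : Fin (traj.N (k+1)) → Fin (traj.N k),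
          ∀ v, traj.cl k (ι v) = some v := by
        choose ι hι using traj.cl_surj k hk
        exact ⟨ι, hι⟩
      have hιinj : Function.Injective ι := by
        intro v w hvw
        have h1 := hι v
        have h2 := hι w
        rw [hvw, h2] at h1
        exact (Option.some_injective _ h1).symm
      have hNle : traj.N (k+1) ≤ traj.N k := by
        have := Fintype.card_le_of_injective ι hιinj
        simpa using this
      have hpos : ∀ v, traj.pos (k+1) (traj.T (k+1)) v = traj.lim k (ι v) := fun v =>
        traj.cl_pos k hk (ι v) v (hι v)
      have hBsucc : B (k+1) ≤ (∑ i, f2 (traj.lim k i)) +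
          ((traj.N k : ℝ) - (traj.N (k+1) : ℝ)) := by
        have hBval : B (k+1) = ∑ i ∈ univ.image ι, f2 (traj.lim k i) := by
          rw [hB]
          rw [Finset.sum_image (fun x _ y _ h => hιinj h)]
          exact Finset.sum_congr rfl fun v _ => by rw [hpos v]
        have hsplit : ∑ i ∈ univ \ univ.image ι, f2 (traj.lim k i)
            + ∑ i ∈ univ.image ι, f2 (traj.lim k i) = ∑ i, f2 (traj.lim k i) :=
          Finset.sum_sdiff (Finset.subset_univ _)
        have hcard : ((univ \ univ.image ι).card : ℝ)
            = (traj.N k : ℝ) - (traj.N (k+1) : ℝ) := by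
          rw [Finset.card_sdiff_of_subset (Finset.subset_univ _),
            Finset.card_image_of_injective _ hιinj]
          simp [Finset.card_univ]
          rw [Nat.cast_sub hNle]
        have hlower : -((traj.N k : ℝ) - (traj.N (k+1) : ℝ))
            ≤ ∑ i ∈ univ \ univ.image ι, f2 (traj.lim k i) := by
          rw [← hcard]
          calc -(((univ \ univ.image ι).card : ℝ))
              = ∑ _i ∈ univ \ univ.image ι, (-1 : ℝ) := by simp
            _ ≤ _ := Finset.sum_le_sum fun i _ => neg_one_le_f2 _
        rw [hBval]
        linarith
      have hcast : (2:ℝ) ≤ (traj.N k : ℝ) := by exact_mod_cast hNk2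
      linarith
  -- conclude
  by_contra hne
  have hNpos : 1 ≤ traj.N m := Nat.one_le_iff_ne_zero.2 hne
  have hNm2 : 2 ≤ traj.N m := by
    by_contra h2
    have h1 : traj.N m = 1 := by omega
    have hsum := traj.deg_sum m (le_refl m)
    have i0 : Fin (traj.N m) := ⟨0, by omega⟩
    have huniv : (univ : Finset (Fin (traj.N m))) = {i0} := by
      symm
      apply Finset.eq_of_subset_of_card_le (Finset.subset_univ _)
      simp [Finset.card_univ, h1]
    rw [huniv, Finset.sum_singleton] at hsum
    rcases traj.deg_pm m (le_refl m) i0 with h | h <;> omega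
  have hBm : B m + (traj.N m : ℝ) ≤ 2 * n * (1 - a) := key m (le_refl m)
  have hNmR : (2:ℝ) ≤ (traj.N m : ℝ) := by exact_mod_cast hNm2
  have hBmneg : B m < 0 := by linarith
  -- last stage: F' = F on Ici (T m), F = B m * exp(t - T m), bounded below by -N m
  have hder := stage_deriv (traj.deg m) (traj.pos m) (Set.Ici (traj.T m))
    (traj.deg_pm m (le_refl m)) (traj.deg_sum m (le_refl m))
    traj.distinct_last traj.ode_last
  set F : ℝ → ℝ := fun t => ∑ i, f2 (traj.pos m t i) with hF
  have hTm : traj.T m ∈ Set.Ici (traj.T m) := Set.self_mem_Ici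
  have hFt : ∀ t ∈ Set.Ici (traj.T m), F t = B m * Real.exp (t - traj.T m) := by
    intro t htmem
    have h := exp_const (convex_Ici _) hder htmem hTm
    have hBF : B m = F (traj.T m) := rfl
    have hkey : Real.exp (t - traj.T m) * Real.exp (-t) = Real.exp (-traj.T m) := by
      rw [← Real.exp_add]; ring_nf
    refine mul_right_cancel₀ (Real.exp_ne_zero (-t)) ?_
    calc F t * Real.exp (-t) = F (traj.T m) * Real.exp (-traj.T m) := h.symm
      _ = F (traj.T m) * (Real.exp (t - traj.T m) * Real.exp (-t)) := by rw [hkey]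
      _ = B m * Real.exp (t - traj.T m) * Real.exp (-t) := by rw [hBF]; ring
  -- lower bound F t ≥ -N m
  have hFlb : ∀ t, -(traj.N m : ℝ) ≤ F t := by
    intro t
    rw [hF]
    calc -(traj.N m : ℝ) = ∑ _i : Fin (traj.N m), (-1 : ℝ) := by simp
      _ ≤ _ := Finset.sum_le_sum fun i _ => neg_one_le_f2 _
  -- choose large t
  set x : ℝ := max 1 (Real.log ((traj.N m : ℝ) / (-(B m))) + 1) with hx
  have hBmpos : (0:ℝ) < -(B m) := by linarith
  have hquotpos : (0:ℝ) < (traj.N m : ℝ) / (-(B m)) := by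
    apply div_pos <;> linarith
  have hexpx : (traj.N m : ℝ) / (-(B m)) < Real.exp x := by
    have h1 : (traj.N m : ℝ) / (-(B m)) < Real.exp (Real.log ((traj.N m : ℝ) / (-(B m))) + 1) := by
      rw [Real.exp_add, Real.exp_log hquotpos]
      nlinarith [Real.exp_one_gt_d9, hquotpos]
    exact h1.trans_le (Real.exp_le_exp.2 (le_max_right _ _))
  have hxpos : (0:ℝ) < x := lt_of_lt_of_le one_pos (le_max_left _ _)
  set t := traj.T m + x with ht
  have htmem : t ∈ Set.Ici (traj.T m) := by
    rw [ht]; simp only [Set.mem_Ici]; linarith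
  have hFt' : F t = B m * Real.exp x := by
    rw [hFt t htmem, ht]; ring_nf
  have hmul : (traj.N m : ℝ) < Real.exp x * (-(B m)) :=
    (div_lt_iff₀ hBmpos).mp hexpx
  have hcontra : B m * Real.exp x < -(traj.N m : ℝ) := by nlinarith
  linarith [hFlb t, hFt'.trans_lt hcontra]
end
end
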